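/- arXiv:0904.4778 — 3 statements merged into one kernel-verified Lean document; each statement's English description precedes it below -/
import Mathlib

section
/- Let λ, μ, ν, λ', μ', ν' be partitions with c(λ';μ',ν') ≠ 0. Then c(λ+λ'; μ+μ', ν+ν') ≥ c(λ;μ,ν). -/
/-- A partition: a weakly decreasing sequence of naturals with finitely many
nonzero terms.  `parts i` is the `(i+1)`-st part `λ_{i+1}`. -/
structure LRPartition where
  parts : ℕ → ℕ
  antitone' : ∀ ⦃i j : ℕ⦄, i ≤ j → parts j ≤ parts i
  eventually_zero : ∃ N, ∀ i, N ≤ i → parts i = 0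

namespace LRPartition

/-- Componentwise sum `λ + μ`. -/
def add (a b : LRPartition) : LRPartition where
  parts i := a.parts i + b.parts i
  antitone' := fun _ _ h => Nat.add_le_add (a.antitone' h) (b.antitone' h)
  eventually_zero := by
    obtain ⟨M, hM⟩ := a.eventually_zero
    obtain ⟨N, hN⟩ := b.eventually_zero
    refine ⟨max M N, fun i hi => ?_⟩
    show a.parts i + b.parts i = 0
    rw [hM i (le_trans (le_max_left M N) hi), hN i (le_trans (le_max_right M N) hi)]

instance : Add LRPartition := ⟨add⟩

@[simp] theorem add_parts (a b : LRPartition) (i : ℕ) :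
    (a + b).parts i = a.parts i + b.parts i := rfl

/-- The stretched partition `n • λ = (nλ₁, nλ₂, …)`. -/
def stretch (n : ℕ) (a : LRPartition) : LRPartition where
  parts i := n * a.parts i
  antitone' := fun _ _ h => Nat.mul_le_mul_left n (a.antitone' h)
  eventually_zero := by
    obtain ⟨N, hN⟩ := a.eventually_zero
    exact ⟨N, fun i hi => by show n * a.parts i = 0; rw [hN i hi, Nat.mul_zero]⟩

instance : SMul ℕ LRPartition := ⟨stretch⟩

@[simp] theorem smul_parts (n : ℕ) (a : LRPartition) (i : ℕ) :
    (n • a).parts i = n * a.parts i := rfl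

/-- Containment of Young diagrams: `μ ⊆ λ` iff `μᵢ ≤ λᵢ` for all `i`. -/
def Sub (m l : LRPartition) : Prop := ∀ i, m.parts i ≤ l.parts i

/-- The number of (nonzero) parts, `l(λ)`. -/
noncomputable def length (a : LRPartition) : ℕ := {i | a.parts i ≠ 0}.ncard

end LRPartition

/-- `u = λ ∪ λ'`: the multiset of (positive) parts of `u` is the multiset union of
those of `λ` and `λ'`, expressed via multiplicities of every positive value `t`. -/
def IsUnion (a b u : LRPartition) : Prop :=
  ∀ t : ℕ, 0 < t →
    {i | u.parts i = t}.ncard = {i | a.parts i = t}.ncard + {i | b.parts i = t}.ncard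

/-- The cells of the skew diagram `λ/μ`: boxes `(i, j)` (row `i`, column `j`,
both 0-indexed) with `μ_{i+1} ≤ j < λ_{i+1}`. -/
def skewCells (l m : LRPartition) : Set (ℕ × ℕ) :=
  {p | m.parts p.1 ≤ p.2 ∧ p.2 < l.parts p.1}

/-- `T` is a Littlewood–Richardson tableau of shape `λ/μ` and content `ν`.
`T (i, j)` records the entry in box `(i, j)`; boxes carry positive integers and `T`
vanishes off the diagram.  Rows weakly increase, columns strictly increase, the entry
`k + 1` occurs `ν_{k+1} = ν.parts k` times, and the lattice-word condition on the
reverse reading word is expressed via its initial segments: for every `r c`, the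
cells read up to position `(r, c)` are exactly those in rows `< r` together with
those in row `r` in columns `≥ c`. -/
structure IsLRTableau (l m n : LRPartition) (T : ℕ × ℕ → ℕ) : Prop where
  sub : LRPartition.Sub m l
  pos : ∀ p ∈ skewCells l m, 0 < T p
  zero : ∀ p, p ∉ skewCells l m → T p = 0
  row_weak : ∀ i j j', (i, j) ∈ skewCells l m → (i, j') ∈ skewCells l m →
    j ≤ j' → T (i, j) ≤ T (i, j')
  col_strict : ∀ i i' j, (i, j) ∈ skewCells l m → (i', j) ∈ skewCells l m →
    i < i' → T (i, j) < T (i', j)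
  content : ∀ k : ℕ, {p ∈ skewCells l m | T p = k + 1}.ncard = n.parts k
  lattice : ∀ r c k : ℕ, 0 < k →
    {p ∈ skewCells l m | (p.1 < r ∨ (p.1 = r ∧ c ≤ p.2)) ∧ T p = k + 1}.ncard ≤
      {p ∈ skewCells l m | (p.1 < r ∨ (p.1 = r ∧ c ≤ p.2)) ∧ T p = k}.ncard

/-- The Littlewood–Richardson coefficient `c(λ; μ, ν)`: the number of LR tableaux of
shape `λ/μ` and content `ν` (zero when `μ ⊄ λ`). -/
noncomputable def LRcoeff (l m n : LRPartition) : ℕ :=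
  Set.ncard {T : ℕ × ℕ → ℕ | IsLRTableau l m n T}

/-- `λ/μ` is a partition shape: `μᵢ = 0` in every nonempty row. -/
def IsPartitionShape (l m : LRPartition) : Prop :=
  ∀ i, m.parts i < l.parts i → m.parts i = 0

/-- `λ/μ` is a rotated partition shape: `λᵢ` takes the same value in all nonempty rows. -/
def IsRotatedShape (l m : LRPartition) : Prop :=
  ∀ i j, m.parts i < l.parts i → m.parts j < l.parts j → l.parts i = l.parts j

/-- A proper skew diagram: neither a partition shape nor a rotated partition. -/
def IsProperSkew (l m : LRPartition) : Prop :=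
  ¬ IsPartitionShape l m ∧ ¬ IsRotatedShape l m

/-- `λ/μ` is a basic skew diagram: `μᵢ < λᵢ` and `μᵢ ≤ λ_{i+1}` for each
`1 ≤ i ≤ l(λ)` (no empty rows or columns). -/
def IsBasicSkew (l m : LRPartition) : Prop :=
  ∀ i, 0 < l.parts i → m.parts i < l.parts i ∧ m.parts i ≤ l.parts (i + 1)

/-- `Q^{λ,μ}_{λ',μ'}(n) = Σ_ν c(nλ+λ'; nμ+μ', ν)`, the sum over all partitions `ν`. -/
noncomputable def Qfun (l m l' m' : LRPartition) (n : ℕ) : ℕ :=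
  ∑ᶠ ν : LRPartition, LRcoeff (n • l + l') (n • m + m') ν

/-- `P^{λ,μ,ν}_{λ',μ',ν'}(n) = c(nλ+λ'; nμ+μ', nν+ν')`. -/
noncomputable def Pfun (l m nu l' m' nu' : LRPartition) (n : ℕ) : ℕ :=
  LRcoeff (n • l + l') (n • m + m') (n • nu + nu')

/-- The partition `(1^a)` consisting of `a` parts equal to `1`. -/
def onesPartition (a : ℕ) : LRPartition where
  parts i := if i < a then 1 else 0
  antitone' := by intro i j h; (try dsimp only); split_ifs <;> omega
  eventually_zero := ⟨a, fun i hi => by (try dsimp only); split_ifs <;> omega⟩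

/-- The partition `(a)` with a single part `a` (the empty partition if `a = 0`). -/
def singlePartition (a : ℕ) : LRPartition where
  parts i := if i = 0 then a else 0
  antitone' := by intro i j h; (try dsimp only); split_ifs <;> omega
  eventually_zero := ⟨1, fun i hi => by (try dsimp only); split_ifs <;> omega⟩
/-! ### Auxiliary development for `lr_add_mono` -/

open scoped Classical

section Aux

/-- A down-closed subset of an interval is an initial segment. -/
lemma downclosed_eq_Ico {a b : ℕ} (S : Finset ℕ) (hS : S ⊆ Finset.Ico a b)
    (hdc : ∀ j' ∈ S, ∀ j, a ≤ j → j ≤ j' → j ∈ S) :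
    S = Finset.Ico a (a + S.card) := by
  ext j
  simp only [Finset.mem_Ico]
  constructor
  · intro hj
    refine ⟨(Finset.mem_Ico.1 (hS hj)).1, ?_⟩
    have h1 : Finset.Ico a (j + 1) ⊆ S := by
      intro x hx
      rw [Finset.mem_Ico] at hx
      exact hdc j hj x hx.1 (Nat.lt_succ_iff.1 hx.2)
    have h2 := Finset.card_le_card h1
    rw [Nat.card_Ico] at h2
    omega
  · rintro ⟨h1, h2⟩
    by_contra hj
    have h3 : S ⊆ Finset.Ico a j := by
      intro x hx
      rw [Finset.mem_Ico]
      refine ⟨(Finset.mem_Ico.1 (hS hx)).1, ?_⟩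
      by_contra h4
      exact hj (hdc x hx j h1 (by omega))
    have h5 := Finset.card_le_card h3
    rw [Nat.card_Ico] at h5
    omega

lemma mem_skewCells (l m : LRPartition) (p : ℕ × ℕ) :
    p ∈ skewCells l m ↔ m.parts p.1 ≤ p.2 ∧ p.2 < l.parts p.1 := Iff.rfl

/-- `ncard` of a `Set.Ico` of naturals. -/
lemma ncard_setIco (a b : ℕ) : (Set.Ico a b).ncard = b - a := by
  rw [← Finset.coe_Ico, Set.ncard_coe_finset, Nat.card_Ico]

/-- Counting the cells of a skew diagram satisfying `P`, row by row. -/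
lemma ncard_cells (l m : LRPartition) (P : ℕ × ℕ → Prop) {R : ℕ}
    (hR : ∀ i, R ≤ i → l.parts i = 0) :
    {p ∈ skewCells l m | P p}.ncard
      = ∑ i ∈ Finset.range R,
          {j | (m.parts i ≤ j ∧ j < l.parts i) ∧ P (i, j)}.ncard := by
  have hinj : ∀ i : ℕ, Function.Injective (fun j => (i, j) : ℕ → ℕ × ℕ) :=
    fun i a b hab => (Prod.mk.injEq .. ▸ hab).2
  have hrow : ∀ i, {j | (m.parts i ≤ j ∧ j < l.parts i) ∧ P (i, j)}
      = ↑((Finset.Ico (m.parts i) (l.parts i)).filter (fun j => P (i, j))) := by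
    intro i
    ext j
    simp only [Set.mem_setOf_eq, Finset.coe_filter, Finset.mem_Ico]
  have hdisj : ∀ x ∈ Finset.range R, ∀ y ∈ Finset.range R, x ≠ y →
      Disjoint
        (((Finset.Ico (m.parts x) (l.parts x)).filter (fun j => P (x, j))).map ⟨_, hinj x⟩)
        (((Finset.Ico (m.parts y) (l.parts y)).filter (fun j => P (y, j))).map ⟨_, hinj y⟩) := by
    intro x _ y _ hxy
    rw [Finset.disjoint_left]
    rintro p hpx hpy
    simp only [Finset.mem_map, Function.Embedding.coeFn_mk] at hpx hpy
    obtain ⟨j1, _, rfl⟩ := hpx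
    obtain ⟨j2, _, h2⟩ := hpy
    exact hxy ((Prod.mk.injEq .. ▸ h2).1.symm)
  have hset : {p ∈ skewCells l m | P p}
      = ↑((Finset.range R).biUnion (fun i =>
          (((Finset.Ico (m.parts i) (l.parts i)).filter (fun j => P (i, j))).map
            ⟨_, hinj i⟩))) := by
    ext ⟨i, j⟩
    simp only [Set.mem_setOf_eq, Finset.coe_biUnion, Finset.mem_coe, Finset.mem_range,
      Set.mem_iUnion, Finset.mem_map, Function.Embedding.coeFn_mk, Finset.mem_filter,
      Finset.mem_Ico, mem_skewCells]
    constructor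
    · rintro ⟨⟨h1, h2⟩, hP⟩
      have hiR : i < R := by
        by_contra hcon
        have := hR i (by omega)
        omega
      exact ⟨i, hiR, j, ⟨⟨h1, h2⟩, hP⟩, rfl⟩
    · rintro ⟨i', hi', j', ⟨⟨h1, h2⟩, hP⟩, heq⟩
      obtain ⟨rfl, rfl⟩ := Prod.mk.injEq .. ▸ heq
      exact ⟨⟨h1, h2⟩, hP⟩
  rw [hset, Set.ncard_coe_finset, Finset.card_biUnion hdisj]
  refine Finset.sum_congr rfl fun i _ => ?_
  rw [hrow i, Set.ncard_coe_finset, Finset.card_map]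

lemma skewCells_finite (l m : LRPartition) : (skewCells l m).Finite := by
  obtain ⟨R, hR⟩ := l.eventually_zero
  apply Set.Finite.subset ((Set.finite_Iio R).prod (Set.finite_Iio (l.parts 0)))
  rintro ⟨i, j⟩ ⟨h1, h2⟩
  have h1' : m.parts i ≤ j := h1
  have h2' : j < l.parts i := h2
  constructor
  · simp only [Set.mem_Iio]
    by_contra hcon
    have := hR i (by omega)
    omega
  · simp only [Set.mem_Iio]
    exact lt_of_lt_of_le h2' (l.antitone' (Nat.zero_le i))

/-- The row-data of a tableau: `sig l m T i k = μᵢ + #{cells in row i with entry ≤ k}`. -/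
noncomputable def sig (l m : LRPartition) (T : ℕ × ℕ → ℕ) (i k : ℕ) : ℕ :=
  m.parts i +
    ((Finset.Ico (m.parts i) (l.parts i)).filter
      (fun j => 0 < T (i, j) ∧ T (i, j) ≤ k)).card

/-- Reconstruction of a tableau from row-data. -/
noncomputable def tab (L M : LRPartition) (s : ℕ → ℕ → ℕ) : ℕ × ℕ → ℕ :=
  (skewCells L M).indicator (fun p => sInf {k | p.2 < s p.1 k})

section SigProps

variable {l m n : LRPartition} {T : ℕ × ℕ → ℕ} (H : IsLRTableau l m n T)

lemma sig_zero (i : ℕ) : sig l m T i 0 = m.parts i := by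
  unfold sig
  rw [Finset.filter_false_of_mem, Finset.card_empty]
  · ring
  · intro j _
    omega

lemma sig_mono (l m : LRPartition) (T : ℕ × ℕ → ℕ) (i : ℕ) {k k' : ℕ} (h : k ≤ k') :
    sig l m T i k ≤ sig l m T i k' := by
  unfold sig
  gcongr


include H in
lemma sig_le (i k : ℕ) : sig l m T i k ≤ l.parts i := by
  unfold sig
  have h1 := Finset.card_le_card
    (Finset.filter_subset (fun j => 0 < T (i, j) ∧ T (i, j) ≤ k)
      (Finset.Ico (m.parts i) (l.parts i)))
  rw [Nat.card_Ico] at h1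
  have := H.sub i
  omega

lemma m_le_sig (i k : ℕ) : m.parts i ≤ sig l m T i k := Nat.le_add_right _ _

include H in
lemma sig_prefix {i j k : ℕ} (hc : (i, j) ∈ skewCells l m) :
    T (i, j) ≤ k ↔ j < sig l m T i k := by
  obtain ⟨h1, h2⟩ := hc
  set S := (Finset.Ico (m.parts i) (l.parts i)).filter
    (fun j => 0 < T (i, j) ∧ T (i, j) ≤ k) with hSdef
  have hIco : S = Finset.Ico (m.parts i) (m.parts i + S.card) := by
    apply downclosed_eq_Ico _ (Finset.filter_subset _ _)
    intro j' hj' j0 hj0 hj0'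
    simp only [hSdef, Finset.mem_filter, Finset.mem_Ico] at hj' ⊢
    have hcell : (i, j0) ∈ skewCells l m := ⟨hj0, show j0 < l.parts i by omega⟩
    have hcell' : (i, j') ∈ skewCells l m := ⟨hj'.1.1, hj'.1.2⟩
    refine ⟨⟨hj0, by omega⟩, H.pos _ hcell, ?_⟩
    exact le_trans (H.row_weak i j0 j' hcell hcell' hj0') hj'.2.2
  constructor
  · intro hk
    have hmem : j ∈ S := by
      simp only [hSdef, Finset.mem_filter, Finset.mem_Ico]
      exact ⟨⟨h1, h2⟩, H.pos _ ⟨h1, h2⟩, hk⟩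
    rw [hIco, Finset.mem_Ico] at hmem
    exact hmem.2
  · intro hk
    have hmem : j ∈ S := by
      rw [hIco, Finset.mem_Ico]
      exact ⟨h1, hk⟩
    simp only [hSdef, Finset.mem_filter] at hmem
    exact hmem.2.2

include H in
lemma sig_col (i k : ℕ) : sig l m T (i + 1) (k + 1) ≤ sig l m T i k := by
  by_cases hc : sig l m T (i + 1) (k + 1) ≤ m.parts (i + 1)
  · exact le_trans hc (le_trans (m.antitone' (Nat.le_succ i)) (m_le_sig i k))
  · push_neg at hc
    set j := sig l m T (i + 1) (k + 1) - 1 with hj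
    have hjm : m.parts (i + 1) ≤ j := by omega
    have hjl : j < l.parts (i + 1) := by
      have := sig_le H (i + 1) (k + 1)
      omega
    have hcell : (i + 1, j) ∈ skewCells l m := ⟨hjm, hjl⟩
    have hT : T (i + 1, j) ≤ k + 1 := by
      rw [sig_prefix H hcell]
      omega
    have hgoal : j < sig l m T i k := by
      by_cases hjm' : j < m.parts i
      · exact lt_of_lt_of_le hjm' (m_le_sig i k)
      · push_neg at hjm'
        have hjl' : j < l.parts i := lt_of_lt_of_le hjl (l.antitone' (Nat.le_succ i))
        have hcell' : (i, j) ∈ skewCells l m := ⟨hjm', hjl'⟩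
        have := H.col_strict i (i + 1) j hcell' hcell (Nat.lt_succ_self i)
        rw [← sig_prefix H hcell']
        omega
    omega

include H in
lemma entry_bound {N : ℕ} (hN : ∀ i, N ≤ i → n.parts i = 0)
    {p : ℕ × ℕ} (hp : p ∈ skewCells l m) : T p ≤ N := by
  set v := T p with hv
  have hv1 : 0 < v := H.pos p hp
  have hfin : {q ∈ skewCells l m | T q = v}.Finite :=
    Set.Finite.subset (skewCells_finite l m) (fun q hq => hq.1)
  have hne : {q ∈ skewCells l m | T q = v}.Nonempty := ⟨p, hp, rfl⟩
  have hpos : 0 < {q ∈ skewCells l m | T q = v}.ncard := (Set.ncard_pos hfin).2 hne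
  have hcont := H.content (v - 1)
  rw [show v - 1 + 1 = v by omega] at hcont
  by_contra hcon
  have := hN (v - 1) (by omega)
  omega

include H in
lemma sig_bound : ∃ B, ∀ i k, B ≤ k → l.parts i ≤ sig l m T i k := by
  obtain ⟨N, hN⟩ := n.eventually_zero
  refine ⟨N, fun i k hk => ?_⟩
  by_cases hml : m.parts i < l.parts i
  · have hcell : (i, l.parts i - 1) ∈ skewCells l m :=
      ⟨show m.parts i ≤ l.parts i - 1 by omega, show l.parts i - 1 < l.parts i by omega⟩
    have hT : T (i, l.parts i - 1) ≤ k := le_trans (entry_bound H hN hcell) hk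
    rw [sig_prefix H hcell] at hT
    omega
  · have := m_le_sig (l := l) (m := m) (T := T) i k
    omega

include H in
lemma row_filter_eq (i k : ℕ) :
    {j | (m.parts i ≤ j ∧ j < l.parts i) ∧ T (i, j) = k + 1}
      = Set.Ico (sig l m T i k) (sig l m T i (k + 1)) := by
  ext j
  simp only [Set.mem_setOf_eq, Set.mem_Ico]
  constructor
  · rintro ⟨⟨h1, h2⟩, hT⟩
    have hcell : (i, j) ∈ skewCells l m := ⟨h1, h2⟩
    constructor
    · by_contra hcon
      push_neg at hcon
      have := (sig_prefix H hcell).2 hcon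
      omega
    · exact (sig_prefix H hcell).1 (by omega)
  · rintro ⟨h1, h2⟩
    have hjm : m.parts i ≤ j := le_trans (m_le_sig i k) h1
    have hjl : j < l.parts i := lt_of_lt_of_le h2 (sig_le H i (k + 1))
    have hcell : (i, j) ∈ skewCells l m := ⟨hjm, hjl⟩
    have hle := (sig_prefix H hcell).2 h2
    have hgt : ¬ T (i, j) ≤ k := fun hcon => by
      have := (sig_prefix H hcell).1 hcon; omega
    exact ⟨⟨hjm, hjl⟩, by omega⟩

include H in
lemma sig_content (k : ℕ) {R : ℕ} (hR : ∀ i, R ≤ i → l.parts i = 0) :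
    n.parts k = ∑ i ∈ Finset.range R, (sig l m T i (k + 1) - sig l m T i k) := by
  have h1 := H.content k
  rw [ncard_cells l m (fun p => T p = k + 1) hR] at h1
  rw [← h1]
  refine Finset.sum_congr rfl fun i hi => ?_
  rw [row_filter_eq H i k, ncard_setIco]

include H in
lemma sig_lattice (k r : ℕ) (hk : 1 ≤ k) :
    (∑ i ∈ Finset.range (r + 1), (sig l m T i (k + 1) - sig l m T i k))
      ≤ ∑ i ∈ Finset.range r, (sig l m T i k - sig l m T i (k - 1)) := by
  obtain ⟨R0, hR0⟩ := l.eventually_zero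
  have hR : ∀ i, max R0 (r + 1) ≤ i → l.parts i = 0 := fun i hi => hR0 i (by omega)
  set c := sig l m T r k with hcdef
  have hlat := H.lattice r c k hk
  have hA : {p ∈ skewCells l m | (p.1 < r ∨ (p.1 = r ∧ c ≤ p.2)) ∧ T p = k + 1}.ncard
      = ∑ i ∈ Finset.range (r + 1), (sig l m T i (k + 1) - sig l m T i k) := by
    rw [ncard_cells l m (fun p => (p.1 < r ∨ (p.1 = r ∧ c ≤ p.2)) ∧ T p = k + 1) hR]
    refine Eq.trans (Finset.sum_subset
      (Finset.range_subset_range.2 (le_max_right R0 (r + 1))) ?_).symm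
      (Finset.sum_congr rfl ?_)
    · intro i hiR hir
      rw [Finset.mem_range] at hir
      push_neg at hir
      show ({j | (m.parts i ≤ j ∧ j < l.parts i) ∧
        ((i < r ∨ (i = r ∧ c ≤ j)) ∧ T (i, j) = k + 1)} : Set ℕ).ncard = 0
      have hempty : {j | (m.parts i ≤ j ∧ j < l.parts i) ∧
          ((i < r ∨ (i = r ∧ c ≤ j)) ∧ T (i, j) = k + 1)} = (∅ : Set ℕ) := by
        ext j
        simp only [Set.mem_setOf_eq, Set.mem_empty_iff_false, iff_false]
        rintro ⟨-, hor, -⟩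
        rcases hor with hlt | ⟨heq, -⟩ <;> omega
      rw [hempty, Set.ncard_empty]
    · intro i hi
      rw [Finset.mem_range] at hi
      show ({j | (m.parts i ≤ j ∧ j < l.parts i) ∧
        ((i < r ∨ (i = r ∧ c ≤ j)) ∧ T (i, j) = k + 1)} : Set ℕ).ncard
          = sig l m T i (k + 1) - sig l m T i k
      have hseteq : {j | (m.parts i ≤ j ∧ j < l.parts i) ∧
          ((i < r ∨ (i = r ∧ c ≤ j)) ∧ T (i, j) = k + 1)}
            = Set.Ico (sig l m T i k) (sig l m T i (k + 1)) := by
        ext j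
        have hrf := Set.ext_iff.mp (row_filter_eq H i k) j
        simp only [Set.mem_setOf_eq, Set.mem_Ico] at hrf ⊢
        constructor
        · rintro ⟨hb, -, hT⟩
          exact hrf.1 ⟨hb, hT⟩
        · intro hj
          obtain ⟨hb, hT⟩ := hrf.2 hj
          refine ⟨hb, ?_, hT⟩
          rcases Nat.lt_or_ge i r with hir | hir
          · exact Or.inl hir
          · have hieq : i = r := by omega
            subst hieq
            exact Or.inr ⟨rfl, by rw [hcdef]; exact hj.1⟩
      rw [hseteq, ncard_setIco]
  have hB : {p ∈ skewCells l m | (p.1 < r ∨ (p.1 = r ∧ c ≤ p.2)) ∧ T p = k}.ncard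
      = ∑ i ∈ Finset.range r, (sig l m T i k - sig l m T i (k - 1)) := by
    rw [ncard_cells l m (fun p => (p.1 < r ∨ (p.1 = r ∧ c ≤ p.2)) ∧ T p = k) hR]
    refine Eq.trans (Finset.sum_subset
      (Finset.range_subset_range.2 (le_trans (by omega) (le_max_right R0 (r + 1)))) ?_).symm
      (Finset.sum_congr rfl ?_)
    · intro i hiR hir
      rw [Finset.mem_range] at hir
      push_neg at hir
      show ({j | (m.parts i ≤ j ∧ j < l.parts i) ∧
        ((i < r ∨ (i = r ∧ c ≤ j)) ∧ T (i, j) = k)} : Set ℕ).ncard = 0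
      have hempty : {j | (m.parts i ≤ j ∧ j < l.parts i) ∧
          ((i < r ∨ (i = r ∧ c ≤ j)) ∧ T (i, j) = k)} = (∅ : Set ℕ) := by
        ext j
        simp only [Set.mem_setOf_eq, Set.mem_empty_iff_false, iff_false]
        rintro ⟨hb, hor, hT⟩
        rcases hor with hlt | ⟨hieq, hcj⟩
        · omega
        · subst hieq
          have hrf := Set.ext_iff.mp (row_filter_eq H i (k - 1)) j
          rw [show k - 1 + 1 = k from by omega] at hrf
          simp only [Set.mem_setOf_eq, Set.mem_Ico] at hrf
          have hjlt := (hrf.1 ⟨hb, hT⟩).2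
          rw [hcdef] at hcj
          omega
      rw [hempty, Set.ncard_empty]
    · intro i hi
      rw [Finset.mem_range] at hi
      show ({j | (m.parts i ≤ j ∧ j < l.parts i) ∧
        ((i < r ∨ (i = r ∧ c ≤ j)) ∧ T (i, j) = k)} : Set ℕ).ncard
          = sig l m T i k - sig l m T i (k - 1)
      have hseteq : {j | (m.parts i ≤ j ∧ j < l.parts i) ∧
          ((i < r ∨ (i = r ∧ c ≤ j)) ∧ T (i, j) = k)}
            = Set.Ico (sig l m T i (k - 1)) (sig l m T i k) := by
        ext j
        have hrf := Set.ext_iff.mp (row_filter_eq H i (k - 1)) j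
        rw [show k - 1 + 1 = k from by omega] at hrf
        simp only [Set.mem_setOf_eq, Set.mem_Ico] at hrf ⊢
        constructor
        · rintro ⟨hb, -, hT⟩
          exact hrf.1 ⟨hb, hT⟩
        · intro hj
          obtain ⟨hb, hT⟩ := hrf.2 hj
          exact ⟨hb, Or.inl hi, hT⟩
      rw [hseteq, ncard_setIco]
  rw [hA, hB] at hlat
  exact hlat

include H in
lemma tab_sig : T = tab l m (sig l m T) := by
  funext p
  obtain ⟨i, j⟩ := p
  by_cases hcell : (i, j) ∈ skewCells l m
  · rw [show tab l m (sig l m T) (i, j) = sInf {k | j < sig l m T i k} from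
      Set.indicator_of_mem hcell _]
    have hset : {k | j < sig l m T i k} = {k | T (i, j) ≤ k} := by
      ext k
      simp only [Set.mem_setOf_eq]
      exact (sig_prefix H hcell).symm
    rw [hset]
    have hne : {k | T (i, j) ≤ k}.Nonempty := ⟨T (i, j), by simp⟩
    apply le_antisymm
    · exact Nat.sInf_mem hne
    · exact Nat.sInf_le (by simp)
  · rw [show tab l m (sig l m T) (i, j) = 0 from Set.indicator_of_notMem hcell _]
    exact H.zero _ hcell

end SigProps

section TabProps

/-- The hypotheses on row-data needed to reconstruct a semistandard tableau. -/
def GoodData (L M : LRPartition) (s : ℕ → ℕ → ℕ) : Prop :=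
  (∀ i, s i 0 = M.parts i) ∧ (∀ i, Monotone (s i)) ∧ (∀ i k, s i k ≤ L.parts i) ∧
    (∃ B, ∀ i, L.parts i ≤ s i B) ∧ (∀ i k, s (i + 1) (k + 1) ≤ s i k)

variable {L M : LRPartition} {s : ℕ → ℕ → ℕ}

lemma dInf_le_iff (hg : GoodData L M s) {i j : ℕ} (hj : j < L.parts i) (k : ℕ) :
    sInf {k' | j < s i k'} ≤ k ↔ j < s i k := by
  obtain ⟨h0, hmono, hle, ⟨B, hB⟩, h6⟩ := hg
  constructor
  · intro hd
    have hne : {k' | j < s i k'}.Nonempty := ⟨B, lt_of_lt_of_le hj (hB i)⟩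
    have hmem := Nat.sInf_mem hne
    simp only [Set.mem_setOf_eq] at hmem
    exact lt_of_lt_of_le hmem (hmono i hd)
  · intro hk
    exact Nat.sInf_le (by simpa using hk)

lemma tab_cell_eq {i j : ℕ} (hc : (i, j) ∈ skewCells L M) :
    tab L M s (i, j) = sInf {k | j < s i k} :=
  Set.indicator_of_mem hc _

lemma tab_prefix (hg : GoodData L M s) {i j : ℕ} (hc : (i, j) ∈ skewCells L M) (k : ℕ) :
    tab L M s (i, j) ≤ k ↔ j < s i k := by
  rw [tab_cell_eq hc]
  exact dInf_le_iff hg hc.2 k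

lemma tab_pos (hg : GoodData L M s) {i j : ℕ} (hc : (i, j) ∈ skewCells L M) :
    0 < tab L M s (i, j) := by
  have hm' : M.parts i ≤ j := hc.1
  by_contra hcon
  push_neg at hcon
  have h1 := (tab_prefix hg hc 0).1 (by omega)
  rw [hg.1 i] at h1
  omega

/-- The membership description of rows of `tab`. -/
lemma tab_row_mem (hg : GoodData L M s) {v : ℕ} (hv : 1 ≤ v) (i j : ℕ) :
    ((M.parts i ≤ j ∧ j < L.parts i) ∧ tab L M s (i, j) = v)
      ↔ (s i (v - 1) ≤ j ∧ j < s i v) := by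
  obtain ⟨h0, hmono, hle, hBex, h6⟩ := id hg
  constructor
  · rintro ⟨⟨h1, h2⟩, hT⟩
    have hc : (i, j) ∈ skewCells L M := ⟨h1, h2⟩
    have hp1 := (tab_prefix hg hc v).1 (by omega)
    have hp2 : ¬ j < s i (v - 1) := fun hcon => by
      have := (tab_prefix hg hc (v - 1)).2 hcon
      omega
    omega
  · rintro ⟨h1, h2⟩
    have hm : M.parts i ≤ j :=
      le_trans (le_of_eq (h0 i).symm) (le_trans (hmono i (Nat.zero_le (v - 1))) h1)
    have hl : j < L.parts i := lt_of_lt_of_le h2 (hle i v)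
    have hc : (i, j) ∈ skewCells L M := ⟨hm, hl⟩
    have hp1 := (tab_prefix hg hc v).2 h2
    have hp2 : ¬ tab L M s (i, j) ≤ v - 1 := fun hcon => by
      have := (tab_prefix hg hc (v - 1)).1 hcon
      omega
    exact ⟨⟨hm, hl⟩, by omega⟩

/-- The reconstruction is a Littlewood–Richardson tableau. -/
lemma isLR_tab (NN : LRPartition) (hg : GoodData L M s)
    (hcont : ∀ k R, (∀ i, R ≤ i → L.parts i = 0) →
      NN.parts k = ∑ i ∈ Finset.range R, (s i (k + 1) - s i k))
    (h9 : ∀ k r, 1 ≤ k →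
      (∑ i ∈ Finset.range (r + 1), (s i (k + 1) - s i k))
        ≤ ∑ i ∈ Finset.range r, (s i k - s i (k - 1))) :
    IsLRTableau L M NN (tab L M s) := by
  obtain ⟨h0, hmono, hle, hBex, h6⟩ := id hg
  have hconsec : ∀ i j, (i, j) ∈ skewCells L M → (i + 1, j) ∈ skewCells L M →
      tab L M s (i, j) < tab L M s (i + 1, j) := by
    intro i j hc hc'
    have hw1 : 0 < tab L M s (i + 1, j) := tab_pos hg hc'
    set w := tab L M s (i + 1, j) with hw
    have hmem : j < s (i + 1) w := (tab_prefix hg hc' w).1 (le_refl _)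
    have h6' := h6 i (w - 1)
    rw [show w - 1 + 1 = w from by omega] at h6'
    have := (tab_prefix hg hc (w - 1)).2 (lt_of_lt_of_le hmem h6')
    omega
  have hchain : ∀ t i j, (i, j) ∈ skewCells L M → (i + 1 + t, j) ∈ skewCells L M →
      tab L M s (i, j) < tab L M s (i + 1 + t, j) := by
    intro t
    induction t with
    | zero => exact fun i j hc hc' => hconsec i j hc hc'
    | succ t ih =>
      intro i j hc hc'
      obtain ⟨h1, h2⟩ := hc
      obtain ⟨h1', h2'⟩ := hc'
      have e1 : M.parts i ≤ j := h1
      have e2 : j < L.parts (i + 1 + (t + 1)) := h2'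
      have hmid : (i + 1 + t, j) ∈ skewCells L M :=
        ⟨show M.parts (i + 1 + t) ≤ j from le_trans (M.antitone' (by omega)) e1,
         show j < L.parts (i + 1 + t) from lt_of_lt_of_le e2 (L.antitone' (by omega))⟩
      exact lt_trans (ih i j ⟨h1, h2⟩ hmid) (hconsec (i + 1 + t) j hmid ⟨h1', h2'⟩)
  refine ⟨?_, ?_, ?_, ?_, ?_, ?_, ?_⟩
  · intro i
    exact le_trans (le_of_eq (h0 i).symm) (hle i 0)
  · rintro ⟨i, j⟩ hp
    exact tab_pos hg hp
  · intro p hp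
    exact Set.indicator_of_notMem hp _
  · intro i j j' hc hc' hjj
    refine (tab_prefix hg hc (tab L M s (i, j'))).2 ?_
    exact lt_of_le_of_lt (by omega : j ≤ j')
      ((tab_prefix hg hc' (tab L M s (i, j'))).1 (le_refl _))
  · intro i i' j hc hc' hii
    obtain ⟨t, rfl⟩ : ∃ t, i' = i + 1 + t := ⟨i' - i - 1, by omega⟩
    exact hchain t i j hc hc'
  · intro k
    obtain ⟨R, hR⟩ := L.eventually_zero
    rw [ncard_cells L M (fun p => tab L M s p = k + 1) hR, hcont k R hR]
    refine Finset.sum_congr rfl fun i hi => ?_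
    show ({j | (M.parts i ≤ j ∧ j < L.parts i) ∧ tab L M s (i, j) = k + 1} : Set ℕ).ncard
      = s i (k + 1) - s i k
    have hseteq : {j | (M.parts i ≤ j ∧ j < L.parts i) ∧ tab L M s (i, j) = k + 1}
        = Set.Ico (s i k) (s i (k + 1)) := by
      ext j
      have := tab_row_mem hg (show 1 ≤ k + 1 by omega) i j
      rw [show k + 1 - 1 = k from by omega] at this
      simp only [Set.mem_setOf_eq, Set.mem_Ico]
      exact this
    rw [hseteq, ncard_setIco]
  · intro r c k hk
    obtain ⟨R0, hR0⟩ := L.eventually_zero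
    have hR : ∀ i, max R0 (r + 1) ≤ i → L.parts i = 0 := fun i hi => hR0 i (by omega)
    rw [ncard_cells L M (fun p => (p.1 < r ∨ (p.1 = r ∧ c ≤ p.2)) ∧ tab L M s p = k + 1) hR,
        ncard_cells L M (fun p => (p.1 < r ∨ (p.1 = r ∧ c ≤ p.2)) ∧ tab L M s p = k) hR]
    have hsplit : ∀ v : ℕ, 1 ≤ v →
        (∑ i ∈ Finset.range (max R0 (r + 1)),
          ({j | (M.parts i ≤ j ∧ j < L.parts i) ∧
            ((i < r ∨ (i = r ∧ c ≤ j)) ∧ tab L M s (i, j) = v)} : Set ℕ).ncard)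
          = (∑ i ∈ Finset.range r, (s i v - s i (v - 1)))
              + (s r v - max (s r (v - 1)) c) := by
      intro v hv
      refine Eq.trans (Finset.sum_subset
        (Finset.range_subset_range.2 (le_max_right R0 (r + 1))) ?_).symm ?_
      · intro i hiR hir
        rw [Finset.mem_range] at hir
        push_neg at hir
        have hempty : {j | (M.parts i ≤ j ∧ j < L.parts i) ∧
            ((i < r ∨ (i = r ∧ c ≤ j)) ∧ tab L M s (i, j) = v)} = (∅ : Set ℕ) := by
          ext j
          simp only [Set.mem_setOf_eq, Set.mem_empty_iff_false, iff_false]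
          rintro ⟨-, hor, -⟩
          rcases hor with hlt | ⟨heq, -⟩ <;> omega
        rw [hempty, Set.ncard_empty]
      · rw [Finset.sum_range_succ]
        congr 1
        · refine Finset.sum_congr rfl fun i hi => ?_
          rw [Finset.mem_range] at hi
          have hseteq : {j | (M.parts i ≤ j ∧ j < L.parts i) ∧
              ((i < r ∨ (i = r ∧ c ≤ j)) ∧ tab L M s (i, j) = v)}
                = Set.Ico (s i (v - 1)) (s i v) := by
            ext j
            have hrm := tab_row_mem hg hv i j
            simp only [Set.mem_setOf_eq, Set.mem_Ico]
            constructor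
            · rintro ⟨hb, -, hT⟩
              exact hrm.1 ⟨hb, hT⟩
            · intro hj
              obtain ⟨hb, hT⟩ := hrm.2 hj
              exact ⟨hb, Or.inl hi, hT⟩
          rw [hseteq, ncard_setIco]
        · have hseteq : {j | (M.parts r ≤ j ∧ j < L.parts r) ∧
              ((r < r ∨ (r = r ∧ c ≤ j)) ∧ tab L M s (r, j) = v)}
                = Set.Ico (max (s r (v - 1)) c) (s r v) := by
            ext j
            have hrm := tab_row_mem hg hv r j
            simp only [Set.mem_setOf_eq, Set.mem_Ico]
            constructor
            · rintro ⟨hb, hor, hT⟩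
              have hj2 := hrm.1 ⟨hb, hT⟩
              have hcj : c ≤ j := by
                rcases hor with hlt | hor
                · exact absurd hlt (lt_irrefl r)
                · exact hor.2
              exact ⟨by omega, hj2.2⟩
            · rintro ⟨hs, hj⟩
              have hs1 : s r (v - 1) ≤ j := le_trans (le_max_left _ _) hs
              have hc1 : c ≤ j := le_trans (le_max_right _ _) hs
              obtain ⟨hb, hT⟩ := hrm.2 ⟨hs1, hj⟩
              exact ⟨hb, Or.inr ⟨trivial, hc1⟩, hT⟩
          rw [hseteq, ncard_setIco]
    rw [hsplit (k + 1) (by omega), hsplit k hk]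
    simp only [Nat.add_sub_cancel]
    have h9' := h9 k r hk
    rw [Finset.sum_range_succ] at h9'
    have m1 : s r (k - 1) ≤ s r k := hmono r (by omega)
    have m2 : s r k ≤ s r (k + 1) := hmono r (by omega)
    omega

/-- The row-data of the reconstruction is the original data. -/
lemma sig_tab (hg : GoodData L M s) (i k : ℕ) : sig L M (tab L M s) i k = s i k := by
  obtain ⟨h0, hmono, hle, hBex, h6⟩ := id hg
  unfold sig
  have hseteq : (Finset.Ico (M.parts i) (L.parts i)).filter
      (fun j => 0 < tab L M s (i, j) ∧ tab L M s (i, j) ≤ k)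
        = Finset.Ico (M.parts i) (s i k) := by
    ext j
    simp only [Finset.mem_filter, Finset.mem_Ico]
    constructor
    · rintro ⟨⟨h1, h2⟩, -, h4⟩
      exact ⟨h1, (tab_prefix hg ⟨h1, h2⟩ k).1 h4⟩
    · rintro ⟨h1, h2⟩
      have hl : j < L.parts i := lt_of_lt_of_le h2 (hle i k)
      have hc : (i, j) ∈ skewCells L M := ⟨h1, hl⟩
      exact ⟨⟨h1, hl⟩, tab_pos hg hc,
        (tab_prefix hg hc k).2 h2⟩
  rw [hseteq, Nat.card_Ico]
  have hm : M.parts i ≤ s i k :=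
    le_trans (le_of_eq (h0 i).symm) (hmono i (Nat.zero_le k))
  omega

end TabProps

/-- The set of LR tableaux of a given shape and content is finite. -/
lemma LR_finite (L M NN : LRPartition) : {T : ℕ × ℕ → ℕ | IsLRTableau L M NN T}.Finite := by
  obtain ⟨R, hR⟩ := L.eventually_zero
  obtain ⟨N, hN⟩ := NN.eventually_zero
  set F : Finset (ℕ × ℕ) := Finset.range R ×ˢ Finset.range (L.parts 0) with hF
  have hcellF : ∀ p ∈ skewCells L M, p ∈ F := by
    rintro ⟨i, j⟩ hp
    obtain ⟨h1, h2⟩ := hp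
    have h1' : M.parts i ≤ j := h1
    have h2' : j < L.parts i := h2
    simp only [hF, Finset.mem_product, Finset.mem_range]
    constructor
    · by_contra hcon
      have := hR i (by omega)
      omega
    · exact lt_of_lt_of_le h2' (L.antitone' (Nat.zero_le i))
  have himg : (fun (T : ℕ × ℕ → ℕ) => (fun p : F => T p)) '' {T | IsLRTableau L M NN T}
      ⊆ Set.univ.pi (fun _ : F => Set.Iic N) := by
    rintro g ⟨T, hT, rfl⟩
    rw [Set.mem_setOf_eq] at hT
    rw [Set.mem_univ_pi]
    intro p
    simp only [Set.mem_Iic]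
    by_cases hp : (p : ℕ × ℕ) ∈ skewCells L M
    · exact entry_bound hT hN hp
    · rw [hT.zero _ hp]
      omega
  refine Set.Finite.of_finite_image
    (Set.Finite.subset (Set.Finite.pi fun _ => Set.finite_Iic N) himg) ?_
  intro T1 h1 T2 h2 heq
  rw [Set.mem_setOf_eq] at h1 h2
  funext p
  by_cases hp : p ∈ skewCells L M
  · exact congrFun heq ⟨p, hcellF p hp⟩
  · rw [h1.zero _ hp, h2.zero _ hp]

end Aux

/-- Lemma 3.1, first part. If `c(λ';μ',ν') ≠ 0` then
`c(λ+λ'; μ+μ', ν+ν') ≥ c(λ;μ,ν)`. -/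
theorem lr_add_mono (l m n l' m' n' : LRPartition)
    (h : LRcoeff l' m' n' ≠ 0) :
    LRcoeff l m n ≤ LRcoeff (l + l') (m + m') (n + n') := by
  unfold LRcoeff at h ⊢
  obtain ⟨T', hT'⟩ := Set.nonempty_of_ncard_ne_zero h
  rw [Set.mem_setOf_eq] at hT'
  have hgood : ∀ T, IsLRTableau l m n T →
      GoodData (l + l') (m + m') (fun i k => sig l m T i k + sig l' m' T' i k) := by
    intro T H
    obtain ⟨B1, hB1⟩ := sig_bound H
    obtain ⟨B2, hB2⟩ := sig_bound hT'
    refine ⟨?_, ?_, ?_, ⟨max B1 B2, ?_⟩, ?_⟩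
    · intro i
      show sig l m T i 0 + sig l' m' T' i 0 = (m + m').parts i
      rw [sig_zero, sig_zero]
      rfl
    · intro i k k' hkk
      exact Nat.add_le_add (sig_mono l m T i hkk) (sig_mono l' m' T' i hkk)
    · intro i k
      show _ ≤ (l + l').parts i
      exact Nat.add_le_add (sig_le H i k) (sig_le hT' i k)
    · intro i
      show (l + l').parts i ≤ _
      exact Nat.add_le_add (hB1 i _ (le_max_left _ _)) (hB2 i _ (le_max_right _ _))
    · intro i k
      exact Nat.add_le_add (sig_col H i k) (sig_col hT' i k)
  have hmapsTo : ∀ T, IsLRTableau l m n T →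
      IsLRTableau (l + l') (m + m') (n + n')
        (tab (l + l') (m + m') (fun i k => sig l m T i k + sig l' m' T' i k)) := by
    intro T H
    refine isLR_tab (n + n') (hgood T H) ?_ ?_
    · intro k R hR
      have hRl : ∀ i, R ≤ i → l.parts i = 0 := by
        intro i hi
        have := hR i hi
        simp only [LRPartition.add_parts] at this
        omega
      have hRl' : ∀ i, R ≤ i → l'.parts i = 0 := by
        intro i hi
        have := hR i hi
        simp only [LRPartition.add_parts] at this
        omega
      show (n + n').parts k = _
      rw [LRPartition.add_parts, sig_content H k hRl, sig_content hT' k hRl',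
        ← Finset.sum_add_distrib]
      refine Finset.sum_congr rfl fun i hi => ?_
      have e1 : sig l m T i k ≤ sig l m T i (k + 1) := sig_mono l m T i (by omega)
      have e2 : sig l' m' T' i k ≤ sig l' m' T' i (k + 1) := sig_mono l' m' T' i (by omega)
      omega
    · intro k r hk
      have a1 := sig_lattice H k r hk
      have a2 := sig_lattice hT' k r hk
      calc ∑ i ∈ Finset.range (r + 1),
            ((sig l m T i (k + 1) + sig l' m' T' i (k + 1)) - (sig l m T i k + sig l' m' T' i k))
          = ∑ i ∈ Finset.range (r + 1),
            ((sig l m T i (k + 1) - sig l m T i k) + (sig l' m' T' i (k + 1) - sig l' m' T' i k)) := by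
            refine Finset.sum_congr rfl fun i hi => ?_
            have e1 : sig l m T i k ≤ sig l m T i (k + 1) := sig_mono l m T i (by omega)
            have e2 : sig l' m' T' i k ≤ sig l' m' T' i (k + 1) := sig_mono l' m' T' i (by omega)
            omega
        _ = (∑ i ∈ Finset.range (r + 1), (sig l m T i (k + 1) - sig l m T i k))
              + ∑ i ∈ Finset.range (r + 1), (sig l' m' T' i (k + 1) - sig l' m' T' i k) :=
            Finset.sum_add_distrib
        _ ≤ (∑ i ∈ Finset.range r, (sig l m T i k - sig l m T i (k - 1)))
              + ∑ i ∈ Finset.range r, (sig l' m' T' i k - sig l' m' T' i (k - 1)) :=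
            Nat.add_le_add a1 a2
        _ = ∑ i ∈ Finset.range r,
            ((sig l m T i k - sig l m T i (k - 1)) + (sig l' m' T' i k - sig l' m' T' i (k - 1))) :=
            Finset.sum_add_distrib.symm
        _ = ∑ i ∈ Finset.range r,
            ((sig l m T i k + sig l' m' T' i k) - (sig l m T i (k - 1) + sig l' m' T' i (k - 1))) := by
            refine Finset.sum_congr rfl fun i hi => ?_
            have e1 : sig l m T i (k - 1) ≤ sig l m T i k := sig_mono l m T i (by omega)
            have e2 : sig l' m' T' i (k - 1) ≤ sig l' m' T' i k := sig_mono l' m' T' i (by omega)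
            omega
  have hinj : Set.InjOn
      (fun T => tab (l + l') (m + m') (fun i k => sig l m T i k + sig l' m' T' i k))
      {T : ℕ × ℕ → ℕ | IsLRTableau l m n T} := by
    intro T1 h1 T2 h2 heq
    rw [Set.mem_setOf_eq] at h1 h2
    simp only at heq
    have e1 : ∀ i k, sig l m T1 i k + sig l' m' T' i k = sig l m T2 i k + sig l' m' T' i k := by
      intro i k
      rw [← sig_tab (hgood T1 h1) i k, ← sig_tab (hgood T2 h2) i k, heq]
    have e2 : sig l m T1 = sig l m T2 := by
      funext i k
      have := e1 i k
      omega
    calc T1 = tab l m (sig l m T1) := tab_sig h1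
      _ = tab l m (sig l m T2) := by rw [e2]
      _ = T2 := (tab_sig h2).symm
  exact Set.ncard_le_ncard_of_injOn
    (fun T => tab (l + l') (m + m') (fun i k => sig l m T i k + sig l' m' T' i k))
    (fun T hT => hmapsTo T hT) hinj (LR_finite (l + l') (m + m') (n + n'))
end

section
/- Let λ, μ, ν, λ', μ', ν' be partitions with c(λ;μ,ν) ≠ 0. Then the generalised stretched LR coefficient P(n) = c(nλ+λ'; nμ+μ', nν+ν') is weakly increasing in n: P(n+1) ≥ P(n) for all n ≥ 0. -/
namespace LRAux

open Finset

theorem LRPartition.ext' {a b : LRPartition} (h : a.parts = b.parts) : a = b := by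
  cases a; cases b; simpa using h

theorem mem_skewCells {l m : LRPartition} {i j : ℕ} :
    (i, j) ∈ skewCells l m ↔ m.parts i ≤ j ∧ j < l.parts i := Iff.rfl

theorem skewCells_finite (l m : LRPartition) : (skewCells l m).Finite := by
  obtain ⟨R, hR⟩ := l.eventually_zero
  apply Set.Finite.subset ((Set.finite_Iio R).prod (Set.finite_Iio (l.parts 0)))
  rintro ⟨i, j⟩ hij
  obtain ⟨h1, h2⟩ : m.parts i ≤ j ∧ j < l.parts i := hij
  refine ⟨?_, ?_⟩
  · show i < R
    by_contra hi
    push_neg at hi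
    have := hR i hi; omega
  · exact lt_of_lt_of_le h2 (l.antitone' (Nat.zero_le i))

/-- A down-closed subset of an interval is an initial interval. -/
theorem down_eq_Ico {a b : ℕ} {s : Finset ℕ} (hs : s ⊆ Finset.Ico a b)
    (hd : ∀ j ∈ s, ∀ j', a ≤ j' → j' ≤ j → j' ∈ s) :
    s = Finset.Ico a (a + s.card) := by
  rcases s.eq_empty_or_nonempty with rfl | hne
  · simp
  · have hMs : s.max' hne ∈ s := s.max'_mem hne
    have haM : a ≤ s.max' hne := (Finset.mem_Ico.mp (hs hMs)).1
    have hIco : s = Finset.Ico a (s.max' hne + 1) := by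
      apply Finset.Subset.antisymm
      · intro x hx
        rw [Finset.mem_Ico]
        exact ⟨(Finset.mem_Ico.mp (hs hx)).1, Nat.lt_succ_of_le (s.le_max' x hx)⟩
      · intro x hx
        rw [Finset.mem_Ico] at hx
        exact hd _ hMs x hx.1 (by omega)
    have hc : s.card = s.max' hne + 1 - a := by
      conv_lhs => rw [hIco]
      rw [Nat.card_Ico]
    have h2 : a + (s.max' hne + 1 - a) = s.max' hne + 1 := by omega
    rw [hc, h2]
    exact hIco

/-- The canonical column-counting function of a tableau. -/
def canonF (l m : LRPartition) (T : ℕ × ℕ → ℕ) (k i : ℕ) : ℕ :=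
  m.parts i + ((Finset.Ico (m.parts i) (l.parts i)).filter (fun j => T (i, j) ≤ k)).card

/-- `F` characterizes the tableau `T`: in row `i`, the cells with entry `≤ k` are
exactly the columns `< F k i`. -/
structure Char (l m : LRPartition) (T : ℕ × ℕ → ℕ) (F : ℕ → ℕ → ℕ) : Prop where
  mono : ∀ i ⦃k k'⦄, k ≤ k' → F k i ≤ F k' i
  base : ∀ i, F 0 i = m.parts i
  le_l : ∀ k i, F k i ≤ l.parts i
  mem : ∀ k i j, (i, j) ∈ skewCells l m → (T (i, j) ≤ k ↔ j < F k i)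
  top : ∃ K, ∀ k, K ≤ k → ∀ i, F k i = l.parts i

theorem entry_le {l m n : LRPartition} {T : ℕ × ℕ → ℕ} (hT : IsLRTableau l m n T)
    {N : ℕ} (hN : ∀ k, N ≤ k → n.parts k = 0) :
    ∀ p ∈ skewCells l m, T p ≤ N := by
  intro p hp
  by_contra h
  push_neg at h
  have h1 := hT.content (T p - 1)
  have h2 : n.parts (T p - 1) = 0 := hN _ (by omega)
  have h3 : p ∈ {q ∈ skewCells l m | T q = (T p - 1) + 1} := ⟨hp, by omega⟩
  have h4 : {q ∈ skewCells l m | T q = (T p - 1) + 1}.Finite :=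
    (skewCells_finite l m).subset (fun q hq => hq.1)
  have h5 := (Set.ncard_pos h4).mpr ⟨p, h3⟩
  omega

theorem isChar_canonF {l m n : LRPartition} {T : ℕ × ℕ → ℕ} (hT : IsLRTableau l m n T) :
    Char l m T (canonF l m T) := by
  have key : ∀ k i, (Finset.Ico (m.parts i) (l.parts i)).filter (fun j => T (i, j) ≤ k)
      = Finset.Ico (m.parts i) (canonF l m T k i) := by
    intro k i
    apply down_eq_Ico (Finset.filter_subset _ _)
    intro j hj j' h1 h2
    rw [Finset.mem_filter, Finset.mem_Ico] at hj ⊢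
    refine ⟨⟨h1, lt_of_le_of_lt h2 hj.1.2⟩, ?_⟩
    exact le_trans (hT.row_weak i j' j ⟨h1, lt_of_le_of_lt h2 hj.1.2⟩ ⟨hj.1.1, hj.1.2⟩ h2) hj.2
  constructor
  · intro i k k' hkk
    apply Nat.add_le_add_left
    apply Finset.card_le_card
    apply Finset.monotone_filter_right
    intro j _ hj
    exact le_trans hj hkk
  · intro i
    have h0 : (Finset.Ico (m.parts i) (l.parts i)).filter (fun j => T (i, j) ≤ 0) = ∅ := by
      apply Finset.eq_empty_iff_forall_notMem.mpr
      intro j hj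
      rw [Finset.mem_filter, Finset.mem_Ico] at hj
      obtain ⟨hj, hj2⟩ := hj
      have := hT.pos (i, j) ⟨hj.1, hj.2⟩
      omega
    unfold canonF
    rw [h0]
    simp
  · intro k i
    have h1 : ((Finset.Ico (m.parts i) (l.parts i)).filter (fun j => T (i, j) ≤ k)).card
        ≤ (Finset.Ico (m.parts i) (l.parts i)).card := Finset.card_filter_le _ _
    rw [Nat.card_Ico] at h1
    have := hT.sub i
    unfold canonF
    omega
  · intro k i j hij
    have h1 := key k i
    constructor
    · intro h
      have : j ∈ (Finset.Ico (m.parts i) (l.parts i)).filter (fun j => T (i, j) ≤ k) := by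
        rw [Finset.mem_filter, Finset.mem_Ico]
        exact ⟨⟨hij.1, hij.2⟩, h⟩
      rw [h1, Finset.mem_Ico] at this
      exact this.2
    · intro h
      have : j ∈ Finset.Ico (m.parts i) (canonF l m T k i) := by
        rw [Finset.mem_Ico]; exact ⟨hij.1, h⟩
      rw [← h1, Finset.mem_filter] at this
      exact this.2
  · obtain ⟨N0, hN0⟩ := n.eventually_zero
    refine ⟨N0, fun k hk i => ?_⟩
    have hfull : (Finset.Ico (m.parts i) (l.parts i)).filter (fun j => T (i, j) ≤ k)
        = Finset.Ico (m.parts i) (l.parts i) := by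
      apply Finset.filter_true_of_mem
      intro j hj
      rw [Finset.mem_Ico] at hj
      exact le_trans (entry_le hT hN0 (i, j) ⟨hj.1, hj.2⟩) hk
    have := hT.sub i
    unfold canonF
    rw [hfull, Nat.card_Ico]
    omega

theorem Char.m_le {l m : LRPartition} {T F} (hc : Char l m T F) (k i : ℕ) :
    m.parts i ≤ F k i := by
  have := hc.base i
  have := hc.mono i (Nat.zero_le k)
  omega

/-- A characterizing function is unique (equal to the canonical one). -/
theorem Char.eq_canonF {l m : LRPartition} {T F} (hc : Char l m T F) :
    F = canonF l m T := by
  funext k i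
  have key : (Finset.Ico (m.parts i) (l.parts i)).filter (fun j => T (i, j) ≤ k)
      = Finset.Ico (m.parts i) (F k i) := by
    ext j
    rw [Finset.mem_filter, Finset.mem_Ico, Finset.mem_Ico]
    constructor
    · rintro ⟨⟨h1, h2⟩, h3⟩
      exact ⟨h1, (hc.mem k i j ⟨h1, h2⟩).mp h3⟩
    · rintro ⟨h1, h2⟩
      have hcell : (i, j) ∈ skewCells l m := ⟨h1, lt_of_lt_of_le h2 (hc.le_l k i)⟩
      exact ⟨⟨h1, hcell.2⟩, (hc.mem k i j hcell).mpr h2⟩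
  have hm := hc.m_le k i
  unfold canonF
  rw [key, Nat.card_Ico]
  omega

theorem Char.pos {l m : LRPartition} {T F} (hc : Char l m T F) :
    ∀ p ∈ skewCells l m, 0 < T p := by
  rintro ⟨i, j⟩ hp
  by_contra h
  push_neg at h
  have := (hc.mem 0 i j hp).mp (by omega)
  rw [hc.base i] at this
  have hp1 : m.parts i ≤ j := hp.1
  omega

theorem Char.row_weak' {l m : LRPartition} {T F} (hc : Char l m T F) :
    ∀ i j j', (i, j) ∈ skewCells l m → (i, j') ∈ skewCells l m → j ≤ j' →
      T (i, j) ≤ T (i, j') := by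
  intro i j j' h1 h2 hjj
  have := (hc.mem (T (i, j')) i j' h2).mp le_rfl
  exact (hc.mem (T (i, j')) i j h1).mpr (by omega)

theorem Char.strip {l m n : LRPartition} {T F} (hT : IsLRTableau l m n T)
    (hc : Char l m T F) (k i : ℕ) : F (k + 1) (i + 1) ≤ F k i := by
  by_contra h
  push_neg at h
  have hcell2 : (i + 1, F k i) ∈ skewCells l m :=
    ⟨le_trans (m.antitone' (Nat.le_succ i)) (hc.m_le k i),
      lt_of_lt_of_le h (hc.le_l _ _)⟩
  have hcell1 : (i, F k i) ∈ skewCells l m :=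
    ⟨hc.m_le k i, lt_of_lt_of_le (lt_of_lt_of_le h (hc.le_l _ _)) (l.antitone' (Nat.le_succ i))⟩
  have h1 : T (i + 1, F k i) ≤ k + 1 := (hc.mem (k + 1) (i + 1) (F k i) hcell2).mpr h
  have h2 : ¬ T (i, F k i) ≤ k := fun hh => absurd ((hc.mem k i (F k i) hcell1).mp hh) (by omega)
  have h3 := hT.col_strict i (i + 1) (F k i) hcell1 hcell2 (Nat.lt_succ_self i)
  omega

theorem colstrict_of_strip {l m : LRPartition} {U F} (hc : Char l m U F)
    (hstrip : ∀ k i, F (k + 1) (i + 1) ≤ F k i) :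
    ∀ i i' j, (i, j) ∈ skewCells l m → (i', j) ∈ skewCells l m → i < i' →
      U (i, j) < U (i', j) := by
  have adj : ∀ i j, (i, j) ∈ skewCells l m → (i + 1, j) ∈ skewCells l m →
      U (i, j) < U (i + 1, j) := by
    intro i j h1 h2
    have hv : 1 ≤ U (i + 1, j) := hc.pos (i + 1, j) h2
    have hj : j < F (U (i + 1, j)) (i + 1) := (hc.mem _ (i + 1) j h2).mp le_rfl
    have hs := hstrip (U (i + 1, j) - 1) i
    rw [Nat.sub_add_cancel hv] at hs
    have := (hc.mem (U (i + 1, j) - 1) i j h1).mpr (by omega)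
    omega
  have main : ∀ d i j, (i, j) ∈ skewCells l m → (i + d + 1, j) ∈ skewCells l m →
      U (i, j) < U (i + d + 1, j) := by
    intro d
    induction d with
    | zero => exact fun i j h1 h2 => adj i j h1 h2
    | succ d ih =>
      intro i j h1 h2
      have hmid : (i + 1, j) ∈ skewCells l m :=
        ⟨le_trans (m.antitone' (Nat.le_succ i)) h1.1,
          lt_of_lt_of_le h2.2 (l.antitone' (by omega))⟩
      have e1 := adj i j h1 hmid
      have heq : i + 1 + d + 1 = i + (d + 1) + 1 := by omega
      have e2 := ih (i + 1) j hmid (by rw [heq]; exact h2)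
      rw [← heq]
      omega
  intro i i' j h1 h2 hlt
  have : i' = i + (i' - i - 1) + 1 := by omega
  rw [this] at h2 ⊢
  exact main _ i j h1 h2

end LRAux
namespace LRAux

open Finset

theorem max_sub_max_le {c a b : ℕ} (h : b ≤ a) : max c a - max c b ≤ a - b := by
  rcases le_total c b with h1 | h1
  · rw [Nat.max_eq_right (le_trans h1 h), Nat.max_eq_right h1]
  · rw [Nat.max_eq_left h1]
    rcases le_total c a with h2 | h2
    · rw [Nat.max_eq_right h2]; omega
    · rw [Nat.max_eq_left h2]; omega

theorem sum_sub_sum {f g : ℕ → ℕ} (h : ∀ i, g i ≤ f i) (r : ℕ) :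
    ∑ i ∈ Finset.range r, (f i - g i)
      = ∑ i ∈ Finset.range r, f i - ∑ i ∈ Finset.range r, g i := by
  induction r with
  | zero => simp
  | succ r ih =>
    rw [Finset.sum_range_succ, Finset.sum_range_succ, Finset.sum_range_succ, ih]
    have h1 : ∑ i ∈ Finset.range r, g i ≤ ∑ i ∈ Finset.range r, f i :=
      Finset.sum_le_sum (fun i _ => h i)
    have h2 := h r
    omega

/-- The key counting identity: the lattice-condition prefix sets of a tableau have
cardinality expressible via the characterizing function. -/
theorem Char.count {l m : LRPartition} {T F} (hc : Char l m T F) (r c k : ℕ) :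
    {p ∈ skewCells l m | (p.1 < r ∨ (p.1 = r ∧ c ≤ p.2)) ∧ T p = k + 1}.ncard
      = (∑ i ∈ Finset.range r, (F (k + 1) i - F k i))
        + (max c (F (k + 1) r) - max c (F k r)) := by
  classical
  obtain ⟨R0, hR0⟩ := l.eventually_zero
  set R := max R0 (r + 1) with hR
  set row : ℕ → Finset ℕ := fun i =>
    if i < r then Finset.Ico (F k i) (F (k + 1) i)
    else if i = r then Finset.Ico (max c (F k r)) (max c (F (k + 1) r))
    else ∅ with hrow
  have hequiv : ∀ i j,
      ((i, j) ∈ skewCells l m ∧ (i < r ∨ (i = r ∧ c ≤ j)) ∧ T (i, j) = k + 1)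
        ↔ j ∈ row i := by
    intro i j
    rcases lt_trichotomy i r with hir | hir | hir
    · simp only [hrow, if_pos hir, Finset.mem_Ico]
      constructor
      · rintro ⟨hcell, -, hval⟩
        have h1 := hc.mem k i j hcell
        have h2 := hc.mem (k + 1) i j hcell
        omega
      · rintro ⟨hge, hlt⟩
        have hcell : (i, j) ∈ skewCells l m :=
          ⟨le_trans (hc.m_le k i) hge, lt_of_lt_of_le hlt (hc.le_l _ _)⟩
        have h1 := hc.mem k i j hcell
        have h2 := hc.mem (k + 1) i j hcell
        exact ⟨hcell, Or.inl hir, by omega⟩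
    · subst hir
      have hrowi : row i = Finset.Ico (max c (F k i)) (max c (F (k + 1) i)) := by
        simp only [hrow]
        simp
      rw [hrowi, Finset.mem_Ico]
      constructor
      · rintro ⟨hcell, hpref, hval⟩
        have hcj : c ≤ j := by
          rcases hpref with h | ⟨-, h⟩
          · omega
          · exact h
        have h1 := hc.mem k i j hcell
        have h2 := hc.mem (k + 1) i j hcell
        constructor
        · exact max_le hcj (by omega)
        · exact lt_of_lt_of_le (by omega) (le_max_right _ _)
      · rintro ⟨hge, hlt⟩
        have hcj : c ≤ j := le_trans (le_max_left _ _) hge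
        have hFj : F k i ≤ j := le_trans (le_max_right _ _) hge
        have hjF : j < F (k + 1) i := by
          rcases le_total c (F (k + 1) i) with h | h
          · rwa [Nat.max_eq_right h] at hlt
          · rw [Nat.max_eq_left h] at hlt; omega
        have hcell : (i, j) ∈ skewCells l m :=
          ⟨le_trans (hc.m_le k i) hFj, lt_of_lt_of_le hjF (hc.le_l _ _)⟩
        have h1 := hc.mem k i j hcell
        have h2 := hc.mem (k + 1) i j hcell
        exact ⟨hcell, Or.inr ⟨rfl, hcj⟩, by omega⟩
    · have hrowi : row i = ∅ := by
        simp only [hrow]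
        rw [if_neg (by omega : ¬ i < r), if_neg (by omega : ¬ i = r)]
      rw [hrowi]
      constructor
      · rintro ⟨-, hpref, -⟩
        rcases hpref with h | ⟨h, -⟩ <;> omega
      · intro h
        exact absurd h (Finset.notMem_empty j)
  have hset : {p ∈ skewCells l m | (p.1 < r ∨ (p.1 = r ∧ c ≤ p.2)) ∧ T p = k + 1}
      = ↑((Finset.range R).biUnion fun i => {i} ×ˢ row i) := by
    ext ⟨i, j⟩
    simp only [Set.mem_setOf_eq, Finset.coe_biUnion, Set.mem_iUnion, Finset.mem_coe,
      Finset.mem_range, Finset.mem_product, Finset.mem_singleton]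
    constructor
    · rintro ⟨hcell, hpref, hval⟩
      refine ⟨i, ?_, rfl, (hequiv i j).mp ⟨hcell, hpref, hval⟩⟩
      have h2 : j < l.parts i := hcell.2
      have : i < R0 := by
        by_contra hh
        push_neg at hh
        have := hR0 i hh
        omega
      omega
    · rintro ⟨i', -, rfl, hmem⟩
      exact (hequiv _ j).mpr hmem
  rw [hset, Set.ncard_coe_finset]
  rw [Finset.card_biUnion (by
    intro x hx y hy hxy
    rw [Function.onFun, Finset.disjoint_left]
    rintro ⟨a, b⟩ h1 h2
    rw [Finset.mem_product, Finset.mem_singleton] at h1 h2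
    exact hxy (h1.1 ▸ h2.1 ▸ rfl))]
  have hcard : ∀ i, ({i} ×ˢ row i).card = (row i).card := fun i => by
    rw [Finset.card_product, Finset.card_singleton, one_mul]
  rw [Finset.sum_congr rfl (fun i _ => hcard i)]
  have hsplit : ∑ i ∈ Finset.range R, (row i).card
      = ∑ i ∈ Finset.range (r + 1), (row i).card := by
    symm
    apply Finset.sum_subset (Finset.range_subset_range.mpr (by omega))
    intro i hiR hir
    rw [Finset.mem_range] at hiR hir
    have hrowi : row i = ∅ := by
      simp only [hrow]
      rw [if_neg (by omega : ¬ i < r), if_neg (by omega : ¬ i = r)]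
    rw [hrowi, Finset.card_empty]
  rw [hsplit, Finset.sum_range_succ]
  congr 1
  · apply Finset.sum_congr rfl
    intro i hi
    rw [Finset.mem_range] at hi
    have hrowi : row i = Finset.Ico (F k i) (F (k + 1) i) := by
      simp only [hrow]
      rw [if_pos hi]
    rw [hrowi, Nat.card_Ico]
  · have hrowr : row r = Finset.Ico (max c (F k r)) (max c (F (k + 1) r)) := by
      simp only [hrow]
      simp
    rw [hrowr, Nat.card_Ico]

theorem Char.countAll {l m : LRPartition} {T F} (hc : Char l m T F) (k R : ℕ)
    (hR : ∀ i, R ≤ i → l.parts i = 0) :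
    {p ∈ skewCells l m | T p = k + 1}.ncard
      = ∑ i ∈ Finset.range R, (F (k + 1) i - F k i) := by
  have h1 : {p ∈ skewCells l m | T p = k + 1}
      = {p ∈ skewCells l m | (p.1 < R ∨ (p.1 = R ∧ 0 ≤ p.2)) ∧ T p = k + 1} := by
    ext ⟨i, j⟩
    simp only [Set.mem_setOf_eq]
    constructor
    · rintro ⟨hcell, hval⟩
      refine ⟨hcell, Or.inl ?_, hval⟩
      have h2 : j < l.parts i := hcell.2
      by_contra hh
      push_neg at hh
      have := hR i hh
      omega
    · rintro ⟨hcell, -, hval⟩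
      exact ⟨hcell, hval⟩
  rw [h1, hc.count R 0 k]
  have e1 : F (k + 1) R = 0 := by
    have := hc.le_l (k + 1) R; have := hR R le_rfl; omega
  have e2 : F k R = 0 := by
    have := hc.le_l k R; have := hR R le_rfl; omega
  rw [e1, e2]
  simp

/-- The "strong" form of the lattice condition, in subtraction-free form. -/
theorem Char.strong {l m n : LRPartition} {T F} (hT : IsLRTableau l m n T)
    (hc : Char l m T F) (k r : ℕ) (hk : 0 < k) :
    (∑ i ∈ Finset.range r, F (k + 1) i) + F (k + 1) r
        + (∑ i ∈ Finset.range r, F (k - 1) i)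
      ≤ (∑ i ∈ Finset.range r, F k i) + F k r + (∑ i ∈ Finset.range r, F k i) := by
  obtain ⟨k, rfl⟩ : ∃ k', k = k' + 1 := ⟨k - 1, by omega⟩
  have hl := hT.lattice r (F (k + 1) r) (k + 1) (by omega)
  rw [hc.count r (F (k + 1) r) (k + 1), hc.count r (F (k + 1) r) k] at hl
  have e1 : max (F (k + 1) r) (F (k + 1 + 1) r) = F (k + 1 + 1) r :=
    Nat.max_eq_right (hc.mono r (by omega))
  have e2 : max (F (k + 1) r) (F (k + 1) r) = F (k + 1) r := Nat.max_self _
  have e3 : max (F (k + 1) r) (F k r) = F (k + 1) r :=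
    Nat.max_eq_left (hc.mono r (by omega))
  rw [e1, e2, e3] at hl
  rw [sum_sub_sum (fun i => hc.mono i (by omega : k + 1 ≤ k + 1 + 1)),
      sum_sub_sum (fun i => hc.mono i (by omega : k ≤ k + 1))] at hl
  have m1 : ∑ i ∈ Finset.range r, F k i ≤ ∑ i ∈ Finset.range r, F (k + 1) i :=
    Finset.sum_le_sum fun i _ => hc.mono i (by omega)
  have m2 : ∑ i ∈ Finset.range r, F (k + 1) i ≤ ∑ i ∈ Finset.range r, F (k + 1 + 1) i :=
    Finset.sum_le_sum fun i _ => hc.mono i (by omega)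
  have m3 : F (k + 1) r ≤ F (k + 1 + 1) r := hc.mono r (by omega)
  simp only [Nat.add_sub_cancel]
  omega

end LRAux
namespace LRAux

open Finset

/-- The sum of two characterizing functions. -/
def combineF (F0 FS : ℕ → ℕ → ℕ) (k i : ℕ) : ℕ := F0 k i + FS k i

@[simp] theorem combineF_apply (F0 FS : ℕ → ℕ → ℕ) (k i : ℕ) :
    combineF F0 FS k i = F0 k i + FS k i := rfl

open Classical in
/-- The combined tableau of shape `(λ+A)/(μ+B)` determined by `F0 + FS`. -/
noncomputable def combineT (l m A B : LRPartition) (F0 FS : ℕ → ℕ → ℕ) : ℕ × ℕ → ℕ :=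
  fun p => if p ∈ skewCells (l + A) (m + B) then sInf {k | p.2 < F0 k p.1 + FS k p.1}
    else 0

theorem combine_char {l m A B : LRPartition} {T0 S : ℕ × ℕ → ℕ} {F0 FS : ℕ → ℕ → ℕ}
    (h0 : Char l m T0 F0) (hS : Char A B S FS) :
    Char (l + A) (m + B) (combineT l m A B F0 FS) (combineF F0 FS) := by
  obtain ⟨K0, hK0⟩ := h0.top
  obtain ⟨KS, hKS⟩ := hS.top
  constructor
  · intro i k k' hkk
    exact Nat.add_le_add (h0.mono i hkk) (hS.mono i hkk)
  · intro i
    rw [combineF_apply, h0.base i, hS.base i]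
    rfl
  · intro k i
    exact Nat.add_le_add (h0.le_l k i) (hS.le_l k i)
  · intro k i j hcell
    have hne : {k | j < F0 k i + FS k i}.Nonempty := by
      refine ⟨max K0 KS, ?_⟩
      show j < F0 (max K0 KS) i + FS (max K0 KS) i
      rw [hK0 _ (le_max_left _ _) i, hKS _ (le_max_right _ _) i]
      exact hcell.2
    have hval : combineT l m A B F0 FS (i, j) = sInf {k | j < F0 k i + FS k i} := by
      simp only [combineT]
      rw [if_pos hcell]
    rw [hval, combineF_apply]
    constructor
    · intro h
      have hmem : j < F0 (sInf {k | j < F0 k i + FS k i}) i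
          + FS (sInf {k | j < F0 k i + FS k i}) i := Nat.sInf_mem hne
      exact lt_of_lt_of_le hmem (Nat.add_le_add (h0.mono i h) (hS.mono i h))
    · intro h
      exact Nat.sInf_le h
  · refine ⟨max K0 KS, fun k hk i => ?_⟩
    rw [combineF_apply, hK0 _ (le_trans (le_max_left _ _) hk) i,
      hKS _ (le_trans (le_max_right _ _) hk) i]
    rfl

theorem combine_isLR {l m nu A B C : LRPartition} {T0 S : ℕ × ℕ → ℕ} {F0 FS : ℕ → ℕ → ℕ}
    (hT0 : IsLRTableau l m nu T0) (hS : IsLRTableau A B C S)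
    (h0 : Char l m T0 F0) (hFS : Char A B S FS) :
    IsLRTableau (l + A) (m + B) (nu + C) (combineT l m A B F0 FS) := by
  have hc := combine_char h0 hFS
  constructor
  · intro i
    have e1 := hT0.sub i
    have e2 := hS.sub i
    show m.parts i + B.parts i ≤ l.parts i + A.parts i
    omega
  · exact hc.pos
  · intro p hp
    simp only [combineT]
    rw [if_neg hp]
  · exact hc.row_weak'
  · exact colstrict_of_strip hc (fun k i => by
      rw [combineF_apply, combineF_apply]
      exact Nat.add_le_add (Char.strip hT0 h0 k i) (Char.strip hS hFS k i))
  · intro k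
    obtain ⟨R1, hR1⟩ := l.eventually_zero
    obtain ⟨R2, hR2⟩ := A.eventually_zero
    set R := max R1 R2 with hRdef
    have hRl : ∀ i, R ≤ i → (l + A).parts i = 0 := fun i hi => by
      show l.parts i + A.parts i = 0
      rw [hR1 i (le_trans (le_max_left _ _) hi), hR2 i (le_trans (le_max_right _ _) hi)]
    rw [hc.countAll k R hRl]
    have e0 := h0.countAll k R (fun i hi => hR1 i (le_trans (le_max_left _ _) hi))
    have eS := hFS.countAll k R (fun i hi => hR2 i (le_trans (le_max_right _ _) hi))
    rw [hT0.content k] at e0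
    rw [hS.content k] at eS
    show _ = nu.parts k + C.parts k
    rw [e0, eS, ← Finset.sum_add_distrib]
    apply Finset.sum_congr rfl
    intro i _
    have a1 : F0 k i ≤ F0 (k + 1) i := h0.mono i (by omega)
    have a2 : FS k i ≤ FS (k + 1) i := hFS.mono i (by omega)
    simp only [combineF_apply]
    omega
  · intro r c k hk
    obtain ⟨k, rfl⟩ : ∃ k', k = k' + 1 := ⟨k - 1, by omega⟩
    rw [hc.count r c (k + 1), hc.count r c k]
    have s0 := Char.strong hT0 h0 (k + 1) r (by omega)
    have sS := Char.strong hS hFS (k + 1) r (by omega)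
    simp only [Nat.add_sub_cancel] at s0 sS
    simp only [combineF_apply]
    have d1 : ∑ i ∈ Finset.range r,
          (F0 (k + 1 + 1) i + FS (k + 1 + 1) i - (F0 (k + 1) i + FS (k + 1) i))
        = ∑ i ∈ Finset.range r, (F0 (k + 1 + 1) i + FS (k + 1 + 1) i)
          - ∑ i ∈ Finset.range r, (F0 (k + 1) i + FS (k + 1) i) :=
      sum_sub_sum (fun i => Nat.add_le_add (h0.mono i (by omega)) (hFS.mono i (by omega))) r
    have d0 : ∑ i ∈ Finset.range r,
          (F0 (k + 1) i + FS (k + 1) i - (F0 k i + FS k i))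
        = ∑ i ∈ Finset.range r, (F0 (k + 1) i + FS (k + 1) i)
          - ∑ i ∈ Finset.range r, (F0 k i + FS k i) :=
      sum_sub_sum (fun i => Nat.add_le_add (h0.mono i (by omega)) (hFS.mono i (by omega))) r
    rw [d1, d0]
    have e3 : ∑ i ∈ Finset.range r, (F0 (k + 1 + 1) i + FS (k + 1 + 1) i)
        = ∑ i ∈ Finset.range r, F0 (k + 1 + 1) i + ∑ i ∈ Finset.range r, FS (k + 1 + 1) i :=
      Finset.sum_add_distrib
    have e2 : ∑ i ∈ Finset.range r, (F0 (k + 1) i + FS (k + 1) i)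
        = ∑ i ∈ Finset.range r, F0 (k + 1) i + ∑ i ∈ Finset.range r, FS (k + 1) i :=
      Finset.sum_add_distrib
    have e1 : ∑ i ∈ Finset.range r, (F0 k i + FS k i)
        = ∑ i ∈ Finset.range r, F0 k i + ∑ i ∈ Finset.range r, FS k i :=
      Finset.sum_add_distrib
    have hm32 : F0 (k + 1) r + FS (k + 1) r ≤ F0 (k + 1 + 1) r + FS (k + 1 + 1) r :=
      Nat.add_le_add (h0.mono r (by omega)) (hFS.mono r (by omega))
    have hm21 : F0 k r + FS k r ≤ F0 (k + 1) r + FS (k + 1) r :=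
      Nat.add_le_add (h0.mono r (by omega)) (hFS.mono r (by omega))
    have hmax1 : max c (F0 (k + 1 + 1) r + FS (k + 1 + 1) r)
          - max c (F0 (k + 1) r + FS (k + 1) r)
        ≤ F0 (k + 1 + 1) r + FS (k + 1 + 1) r - (F0 (k + 1) r + FS (k + 1) r) :=
      max_sub_max_le hm32
    have hmax0 : max c (F0 k r + FS k r) ≤ max c (F0 (k + 1) r + FS (k + 1) r) :=
      max_le_max le_rfl hm21
    have ms1 : ∑ i ∈ Finset.range r, F0 k i ≤ ∑ i ∈ Finset.range r, F0 (k + 1) i :=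
      Finset.sum_le_sum fun i _ => h0.mono i (by omega)
    have ms2 : ∑ i ∈ Finset.range r, F0 (k + 1) i
        ≤ ∑ i ∈ Finset.range r, F0 (k + 1 + 1) i :=
      Finset.sum_le_sum fun i _ => h0.mono i (by omega)
    have ms3 : ∑ i ∈ Finset.range r, FS k i ≤ ∑ i ∈ Finset.range r, FS (k + 1) i :=
      Finset.sum_le_sum fun i _ => hFS.mono i (by omega)
    have ms4 : ∑ i ∈ Finset.range r, FS (k + 1) i
        ≤ ∑ i ∈ Finset.range r, FS (k + 1 + 1) i :=
      Finset.sum_le_sum fun i _ => hFS.mono i (by omega)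
    omega

/-- A tableau is determined by its characterizing function. -/
theorem tableau_unique {A B C C' : LRPartition} {S S' : ℕ × ℕ → ℕ} {F : ℕ → ℕ → ℕ}
    (hS : IsLRTableau A B C S) (hS' : IsLRTableau A B C' S')
    (h : Char A B S F) (h' : Char A B S' F) : S = S' := by
  funext p
  by_cases hp : p ∈ skewCells A B
  · obtain ⟨i, j⟩ := p
    have h1 : S (i, j) ≤ S' (i, j) :=
      (h.mem _ i j hp).mpr ((h'.mem _ i j hp).mp le_rfl)
    have h2 : S' (i, j) ≤ S (i, j) :=
      (h'.mem _ i j hp).mpr ((h.mem _ i j hp).mp le_rfl)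
    omega
  · rw [hS.zero p hp, hS'.zero p hp]

theorem tableaux_finite (l m n : LRPartition) : {T : ℕ × ℕ → ℕ | IsLRTableau l m n T}.Finite := by
  classical
  obtain ⟨N, hN⟩ := n.eventually_zero
  set cF := (skewCells_finite l m).toFinset with hcF
  have hsub : {T : ℕ × ℕ → ℕ | IsLRTableau l m n T} ⊆
      (fun g : cF → Fin (N + 1) => fun p => if h : p ∈ cF then (g ⟨p, h⟩ : ℕ) else 0) ''
        Set.univ := by
    intro T hT
    have hb : ∀ p ∈ skewCells l m, T p ≤ N := entry_le hT hN
    refine ⟨fun q => ⟨T q, Nat.lt_succ_of_le (hb q ((skewCells_finite l m).mem_toFinset.mp q.2))⟩,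
      Set.mem_univ _, ?_⟩
    funext p
    by_cases hp : p ∈ cF
    · simp only [dif_pos hp]
    · simp only [dif_neg hp]
      exact (hT.zero p (fun hh => hp ((skewCells_finite l m).mem_toFinset.mpr hh))).symm
  exact Set.Finite.subset (Set.finite_univ.image _) hsub

/-- The key monotonicity: adding a nonempty LR family enlarges the coefficient. -/
theorem LRcoeff_le {l m nu : LRPartition} (A B C : LRPartition) {T0 : ℕ × ℕ → ℕ}
    (hT0 : IsLRTableau l m nu T0) :
    LRcoeff A B C ≤ LRcoeff (l + A) (m + B) (nu + C) := by
  classical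
  have h0 : Char l m T0 (canonF l m T0) := isChar_canonF hT0
  refine Set.ncard_le_ncard_of_injOn
    (fun S => combineT l m A B (canonF l m T0) (canonF A B S)) ?_ ?_ (tableaux_finite _ _ _)
  · intro S hS
    exact combine_isLR hT0 hS h0 (isChar_canonF hS)
  · intro S hS S' hS' heq
    simp only [Set.mem_setOf_eq] at hS hS'
    have heq' : combineT l m A B (canonF l m T0) (canonF A B S)
        = combineT l m A B (canonF l m T0) (canonF A B S') := heq
    have c1 := combine_char h0 (isChar_canonF hS)
    have c2 := combine_char h0 (isChar_canonF hS')
    rw [← heq'] at c2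
    have e1 := c1.eq_canonF
    have e2 := c2.eq_canonF
    have e3 : combineF (canonF l m T0) (canonF A B S)
        = combineF (canonF l m T0) (canonF A B S') := by rw [e1, e2]
    have e4 : canonF A B S = canonF A B S' := by
      funext k i
      have := congrFun (congrFun e3 k) i
      rw [combineF_apply, combineF_apply] at this
      omega
    exact tableau_unique hS hS' (isChar_canonF hS) (e4 ▸ isChar_canonF hS')

end LRAux
/-- Remark 3.3. If `c(λ;μ,ν) ≠ 0`, then
`P(n) = c(nλ+λ'; nμ+μ', nν+ν')` is weakly increasing in `n`. -/
theorem P_weakly_increasing (l m nu l' m' nu' : LRPartition)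
    (h : LRcoeff l m nu ≠ 0) (n : ℕ) :
    Pfun l m nu l' m' nu' n ≤ Pfun l m nu l' m' nu' (n + 1) := by
  obtain ⟨T0, hT0⟩ : {T : ℕ × ℕ → ℕ | IsLRTableau l m nu T}.Nonempty :=
    Set.nonempty_of_ncard_ne_zero h
  have e1 : (n + 1) • l + l' = l + (n • l + l') :=
    LRAux.LRPartition.ext' (funext fun i => by
      show (n + 1) * l.parts i + l'.parts i = l.parts i + (n * l.parts i + l'.parts i)
      ring)
  have e2 : (n + 1) • m + m' = m + (n • m + m') :=
    LRAux.LRPartition.ext' (funext fun i => by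
      show (n + 1) * m.parts i + m'.parts i = m.parts i + (n * m.parts i + m'.parts i)
      ring)
  have e3 : (n + 1) • nu + nu' = nu + (n • nu + nu') :=
    LRAux.LRPartition.ext' (funext fun i => by
      show (n + 1) * nu.parts i + nu'.parts i = nu.parts i + (n * nu.parts i + nu'.parts i)
      ring)
  unfold Pfun
  rw [e1, e2, e3]
  exact LRAux.LRcoeff_le _ _ _ hT0
end

section
/- Let μ ⊆ λ and μ' ⊆ λ' be partitions. Then Σ_{ν'} c(λ+λ'; μ+μ', ν') ≥ Σ_ν c(λ;μ,ν), where both sums range over all partitions (only finitely many summands are nonzero). -/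
namespace LRp
open Finset

/-- grid of cells: rows `i < N`, columns in `f i`. -/
def grid (N : ℕ) (f : ℕ → Finset ℕ) : Finset (ℕ × ℕ) :=
  (Finset.range N).biUnion fun i =>
    (f i).map ⟨Prod.mk i, fun a b h => by simpa using h⟩

lemma mem_grid {N : ℕ} {f : ℕ → Finset ℕ} {p : ℕ × ℕ} :
    p ∈ grid N f ↔ p.1 < N ∧ p.2 ∈ f p.1 := by
  obtain ⟨i, c⟩ := p
  simp only [grid, Finset.mem_biUnion, Finset.mem_map, Finset.mem_range,
    Function.Embedding.coeFn_mk]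
  constructor
  · rintro ⟨j, hj, c', hc', h⟩
    injection h with h1 h2
    subst h1; subst h2
    exact ⟨hj, hc'⟩
  · rintro ⟨h1, h2⟩
    exact ⟨i, h1, c, h2, rfl⟩

lemma card_grid (N : ℕ) (f : ℕ → Finset ℕ) :
    (grid N f).card = ∑ i ∈ Finset.range N, (f i).card := by
  rw [grid, Finset.card_biUnion]
  · simp
  · intro x _ y _ hxy
    simp only [Finset.disjoint_left]
    intro p hp hq
    simp only [Finset.mem_map, Function.Embedding.coeFn_mk] at hp hq
    obtain ⟨a, _, rfl⟩ := hp
    obtain ⟨b, _, h⟩ := hq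
    exact hxy (by simpa using (Prod.mk.injEq .. ▸ h).1.symm)

lemma downclosed_eq_Ico {a b : ℕ} {S : Finset ℕ} (hS : S ⊆ Finset.Ico a b)
    (hdc : ∀ c c', a ≤ c → c ≤ c' → c' ∈ S → c ∈ S) :
    S = Finset.Ico a (a + S.card) := by
  ext c
  simp only [Finset.mem_Ico]
  constructor
  · intro hc
    have h1 : a ≤ c := (Finset.mem_Ico.mp (hS hc)).1
    refine ⟨h1, ?_⟩
    have hsub : Finset.Ico a (c + 1) ⊆ S := fun x hx =>
      hdc x c (Finset.mem_Ico.mp hx).1 (Nat.lt_succ_iff.mp (Finset.mem_Ico.mp hx).2) hc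
    have := Finset.card_le_card hsub
    rw [Nat.card_Ico] at this
    omega
  · rintro ⟨h1, h2⟩
    by_contra hc
    have hsub : S ⊆ Finset.Ico a c := by
      intro x hx
      have hax := (Finset.mem_Ico.mp (hS hx)).1
      rw [Finset.mem_Ico]
      refine ⟨hax, ?_⟩
      by_contra hxc
      exact hc (hdc c x h1 (le_of_not_gt hxc) hx)
    have := Finset.card_le_card hsub
    rw [Nat.card_Ico] at this
    omega

end LRp
namespace LRp
open Finset

lemma mem_skewCells {l m : LRPartition} {i c : ℕ} :
    (i, c) ∈ skewCells l m ↔ m.parts i ≤ c ∧ c < l.parts i := Iff.rfl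

def rowF (l m : LRPartition) (i : ℕ) : Finset ℕ := Finset.Ico (m.parts i) (l.parts i)

def E (l m : LRPartition) (T : ℕ × ℕ → ℕ) (i v : ℕ) : ℕ :=
  ((rowF l m i).filter (fun c => T (i, c) ≤ v)).card

section Analysis

variable {l m n : LRPartition} {T : ℕ × ℕ → ℕ}

lemma filter_eq (h : IsLRTableau l m n T) (i v : ℕ) :
    (rowF l m i).filter (fun c => T (i, c) ≤ v) =
      Finset.Ico (m.parts i) (m.parts i + E l m T i v) := by
  refine downclosed_eq_Ico (fun c hc => Finset.mem_of_mem_filter c hc) ?_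
  intro c c' hac hcc' hc'
  rw [Finset.mem_filter] at hc' ⊢
  obtain ⟨hc'row, hc'v⟩ := hc'
  rw [rowF, Finset.mem_Ico] at hc'row
  have hcrow : c ∈ rowF l m i := by
    rw [rowF, Finset.mem_Ico]; omega
  refine ⟨hcrow, le_trans ?_ hc'v⟩
  exact h.row_weak i c c' (mem_skewCells.mpr (by rw [rowF, Finset.mem_Ico] at hcrow; omega))
    (mem_skewCells.mpr (by omega)) hcc'

lemma E_le (l m : LRPartition) (T : ℕ × ℕ → ℕ) (i v : ℕ) :
    E l m T i v ≤ l.parts i - m.parts i := by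
  have := Finset.card_filter_le (rowF l m i) (fun c => T (i, c) ≤ v)
  rwa [rowF, Nat.card_Ico] at this

lemma E_mono (l m : LRPartition) (T : ℕ × ℕ → ℕ) (i : ℕ) {v w : ℕ} (hvw : v ≤ w) :
    E l m T i v ≤ E l m T i w :=
  Finset.card_le_card (by
    intro c hc
    rw [Finset.mem_filter] at hc ⊢
    exact ⟨hc.1, le_trans hc.2 hvw⟩)

lemma le_iff (h : IsLRTableau l m n T) {i c : ℕ} (hc : (i, c) ∈ skewCells l m) (v : ℕ) :
    T (i, c) ≤ v ↔ c < m.parts i + E l m T i v := by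
  have hmem : c ∈ rowF l m i := by
    rw [rowF, Finset.mem_Ico]; exact mem_skewCells.mp hc
  constructor
  · intro hv
    have : c ∈ (rowF l m i).filter (fun c => T (i, c) ≤ v) := Finset.mem_filter.mpr ⟨hmem, hv⟩
    rw [filter_eq h, Finset.mem_Ico] at this
    exact this.2
  · intro hv
    have : c ∈ Finset.Ico (m.parts i) (m.parts i + E l m T i v) := by
      rw [Finset.mem_Ico]; exact ⟨(mem_skewCells.mp hc).1, hv⟩
    rw [← filter_eq h, Finset.mem_filter] at this
    exact this.2

lemma E_zero (h : IsLRTableau l m n T) (i : ℕ) : E l m T i 0 = 0 := by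
  rw [E, Finset.card_eq_zero, Finset.filter_eq_empty_iff]
  intro c hc
  have : 0 < T (i, c) := h.pos _ (mem_skewCells.mpr (by rw [rowF, Finset.mem_Ico] at hc; omega))
  omega

/-- membership in the per-row interval of value `k+1` -/
lemma mem_rowIco (h : IsLRTableau l m n T) {i c : ℕ} (k : ℕ) :
    c ∈ Finset.Ico (m.parts i + E l m T i k) (m.parts i + E l m T i (k + 1)) ↔
      (i, c) ∈ skewCells l m ∧ T (i, c) = k + 1 := by
  rw [Finset.mem_Ico]
  constructor
  · rintro ⟨h1, h2⟩
    have hcell : (i, c) ∈ skewCells l m := by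
      rw [mem_skewCells]
      have := E_le l m T i (k + 1)
      have hml := h.sub i
      omega
    have ha := (le_iff h hcell (k + 1)).mpr h2
    have hb : ¬ T (i, c) ≤ k := fun hk => by have := (le_iff h hcell k).mp hk; omega
    constructor
    · exact hcell
    · omega
  · rintro ⟨hcell, hv⟩
    have ha := (le_iff h hcell (k + 1)).mp (by omega)
    have hb : ¬ c < m.parts i + E l m T i k := fun hk => by
      have := (le_iff h hcell k).mpr hk; omega
    omega

/-- the set of cells with rows `< R`, value `k+1`, and column condition trivial -/
lemma set_eq_grid (h : IsLRTableau l m n T) (R k : ℕ) :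
    {p ∈ skewCells l m | p.1 < R ∧ T p = k + 1} =
      ↑(grid R (fun i => Finset.Ico (m.parts i + E l m T i k) (m.parts i + E l m T i (k + 1)))) := by
  ext ⟨i, c⟩
  rw [Set.mem_setOf_eq, Finset.mem_coe, mem_grid]
  simp only
  rw [mem_rowIco h k]
  tauto

/-- summed lattice condition, from `h.lattice` -/
lemma sumR (h : IsLRTableau l m n T) (r k : ℕ) (hk : 1 ≤ k) :
    ∑ i ∈ Finset.range (r + 1), (E l m T i (k + 1) - E l m T i k) ≤
      ∑ i ∈ Finset.range r, (E l m T i k - E l m T i (k - 1)) := by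
  have hl := h.lattice r (m.parts r + E l m T r k) k hk
  have e1 : {p ∈ skewCells l m | (p.1 < r ∨ (p.1 = r ∧ m.parts r + E l m T r k ≤ p.2)) ∧ T p = k + 1} =
      ↑(grid (r + 1) (fun i => Finset.Ico (m.parts i + E l m T i k) (m.parts i + E l m T i (k + 1)))) := by
    ext ⟨i, c⟩
    rw [Set.mem_setOf_eq, Finset.mem_coe, mem_grid]
    simp only
    rw [mem_rowIco h k]
    constructor
    · rintro ⟨hcell, hpos, hval⟩
      exact ⟨by omega, hcell, hval⟩
    · rintro ⟨hiR, hcell, hval⟩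
      refine ⟨hcell, ?_, hval⟩
      rcases Nat.lt_or_ge i r with hir | hir
      · exact Or.inl hir
      · have : i = r := by omega
        subst this
        right
        refine ⟨rfl, ?_⟩
        have := (mem_rowIco h k (c := c) (i := i)).mpr ⟨hcell, hval⟩
        rw [Finset.mem_Ico] at this
        exact this.1
  have e2 : {p ∈ skewCells l m | (p.1 < r ∨ (p.1 = r ∧ m.parts r + E l m T r k ≤ p.2)) ∧ T p = k} =
      ↑(grid r (fun i => Finset.Ico (m.parts i + E l m T i (k - 1)) (m.parts i + E l m T i k))) := by
    ext ⟨i, c⟩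
    rw [Set.mem_setOf_eq, Finset.mem_coe, mem_grid]
    simp only
    have hk1 : k - 1 + 1 = k := by omega
    constructor
    · rintro ⟨hcell, hpos, hval⟩
      have hmem : c ∈ Finset.Ico (m.parts i + E l m T i (k - 1))
          (m.parts i + E l m T i (k - 1 + 1)) :=
        (mem_rowIco h (k - 1)).mpr ⟨hcell, by omega⟩
      rw [hk1] at hmem
      refine ⟨?_, hmem⟩
      rcases hpos with hir | ⟨hir, hcc⟩
      · exact hir
      · exfalso
        subst hir
        have := (le_iff h hcell k).mp (le_of_eq hval)
        omega
    · rintro ⟨hiR, hmem⟩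
      rw [← hk1] at hmem
      have := (mem_rowIco h (k - 1)).mp hmem
      refine ⟨this.1, Or.inl hiR, by omega⟩
  rw [e1, e2, Set.ncard_coe_finset, Set.ncard_coe_finset, card_grid, card_grid] at hl
  have hk1 : k - 1 + 1 = k := by omega
  simp only [Nat.card_Ico] at hl
  calc ∑ i ∈ Finset.range (r + 1), (E l m T i (k + 1) - E l m T i k)
      = ∑ i ∈ Finset.range (r + 1), (m.parts i + E l m T i (k + 1) - (m.parts i + E l m T i k)) := by
        apply Finset.sum_congr rfl; intro i _; omega
    _ ≤ ∑ i ∈ Finset.range r, (m.parts i + E l m T i k - (m.parts i + E l m T i (k - 1))) := hl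
    _ = ∑ i ∈ Finset.range r, (E l m T i k - E l m T i (k - 1)) := by
        apply Finset.sum_congr rfl; intro i _; omega

end Analysis
end LRp
namespace LRp
open Finset

section Analysis2
variable {l m n : LRPartition} {T : ℕ × ℕ → ℕ}

lemma E_stab (h : IsLRTableau l m n T) :
    ∀ i u, i + 2 ≤ u → ∀ j, j ≤ i → E l m T j u = E l m T j (u - 1) := by
  intro i
  induction i with
  | zero =>
    intro u hu j hj
    interval_cases j
    have hs := sumR h 0 (u - 1) (by omega)
    have hu1 : u - 1 + 1 = u := by omega
    rw [hu1] at hs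
    simp only [Finset.sum_range_succ, Finset.range_zero, Finset.sum_empty, zero_add] at hs
    have := E_mono l m T 0 (show u - 1 ≤ u by omega)
    omega
  | succ i ih =>
    intro u hu j hj
    have hs := sumR h (i + 1) (u - 1) (by omega)
    have hu1 : u - 1 + 1 = u := by omega
    rw [hu1] at hs
    have hrhs : ∑ j ∈ Finset.range (i + 1), (E l m T j (u - 1) - E l m T j (u - 1 - 1)) = 0 := by
      apply Finset.sum_eq_zero
      intro j hj'
      rw [Finset.mem_range] at hj'
      have := ih (u - 1) (by omega) j (by omega)
      omega
    rw [hrhs, Nat.le_zero, Finset.sum_eq_zero_iff] at hs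
    have := hs j (Finset.mem_range.mpr (by omega))
    have := E_mono l m T j (show u - 1 ≤ u by omega)
    omega

lemma E_top (h : IsLRTableau l m n T) (i : ℕ) :
    ∀ v, i + 1 ≤ v → E l m T i v = l.parts i - m.parts i := by
  have hfull : E l m T i (i + 1) = l.parts i - m.parts i := by
    have hfil : (rowF l m i).filter (fun c => T (i, c) ≤ i + 1) = rowF l m i := by
      rw [Finset.filter_eq_self]
      intro c hc
      by_contra hgt
      set u := T (i, c) with hu
      have hui : i + 2 ≤ u := by omega
      have hcell : (i, c) ∈ skewCells l m :=
        mem_skewCells.mpr (by rw [rowF, Finset.mem_Ico] at hc; exact hc)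
      have hmem : c ∈ Finset.Ico (m.parts i + E l m T i (u - 1))
          (m.parts i + E l m T i (u - 1 + 1)) :=
        (mem_rowIco h (u - 1)).mpr ⟨hcell, by omega⟩
      have heq : E l m T i (u - 1 + 1) = E l m T i (u - 1) := by
        have := E_stab h (u - 2) (u - 1 + 1) (by omega) i (by omega)
        have h2 : u - 1 + 1 - 1 = u - 1 := by omega
        rw [h2] at this
        exact this
      rw [Finset.mem_Ico, heq] at hmem
      omega
    rw [E, hfil, rowF, Nat.card_Ico]
  intro v hv
  induction v with
  | zero => omega
  | succ w ihw =>
    rcases Nat.lt_or_ge w (i + 1) with hw | hw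
    · have : w + 1 = i + 1 := by omega
      rw [this]; exact hfull
    · have hstep : E l m T i (w + 1) = E l m T i w := by
        have := E_stab h (w - 1) (w + 1) (by omega) i (by omega)
        have h2 : w + 1 - 1 = w := by omega
        rw [h2] at this
        exact this
      rw [hstep]
      exact ihw hw

lemma T_le_row (h : IsLRTableau l m n T) {i c : ℕ} (hc : (i, c) ∈ skewCells l m) :
    T (i, c) ≤ i + 1 := by
  rw [le_iff h hc, E_top h i (i + 1) le_rfl]
  have := mem_skewCells.mp hc
  have := h.sub i
  omega

lemma E_col (h : IsLRTableau l m n T) (i v : ℕ) (hv : 1 ≤ v) :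
    m.parts (i + 1) + E l m T (i + 1) v ≤ m.parts i + E l m T i (v - 1) := by
  by_cases hE : E l m T (i + 1) v = 0
  · have h2 : m.parts (i + 1) ≤ m.parts i := m.antitone' (by omega)
    omega
  · set c := m.parts (i + 1) + E l m T (i + 1) v - 1 with hcdef
    have hcf : c ∈ Finset.Ico (m.parts (i + 1)) (m.parts (i + 1) + E l m T (i + 1) v) := by
      rw [Finset.mem_Ico]; omega
    rw [← filter_eq h, Finset.mem_filter] at hcf
    obtain ⟨hcrow, hcv⟩ := hcf
    rw [rowF, Finset.mem_Ico] at hcrow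
    have hcell1 : (i + 1, c) ∈ skewCells l m := mem_skewCells.mpr hcrow
    rcases Nat.lt_or_ge c (m.parts i) with hlt | hge
    · omega
    · have hcell0 : (i, c) ∈ skewCells l m :=
        mem_skewCells.mpr ⟨hge, lt_of_lt_of_le hcrow.2 (l.antitone' (Nat.le_succ i))⟩
      have hstrict := h.col_strict i (i + 1) c hcell0 hcell1 (Nat.lt_succ_self i)
      have hTle : T (i, c) ≤ v - 1 := by omega
      have := (le_iff h hcell0 (v - 1)).mp hTle
      omega

end Analysis2
end LRp
namespace LRp
open Finset

/-- The column-count profile of the canonical (height) LR filling of `λ'/μ'`. -/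
def E0 (l' m' : LRPartition) (i v : ℕ) : ℕ :=
  (if v ≤ i then min (l'.parts i) (m'.parts (i - v)) else l'.parts i) - m'.parts i

section E0sec
variable {l' m' : LRPartition} (h : LRPartition.Sub m' l')
include h

lemma E0_zero (i : ℕ) : E0 l' m' i 0 = 0 := by
  have h1 := h i
  have h2 : min (l'.parts i) (m'.parts (i - 0)) = m'.parts i := by
    rw [Nat.sub_zero]; exact min_eq_right (h i)
  rw [E0, if_pos (Nat.zero_le i), h2, Nat.sub_self]

lemma E0_mono (i : ℕ) {v w : ℕ} (hvw : v ≤ w) : E0 l' m' i v ≤ E0 l' m' i w := by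
  have h1 : m'.parts (i - v) ≤ m'.parts (i - w) := m'.antitone' (by omega)
  have h2 := h i
  rw [E0, E0]
  split_ifs <;> omega

lemma E0_le (i v : ℕ) : E0 l' m' i v ≤ l'.parts i - m'.parts i := by
  rw [E0]
  split_ifs <;> omega

lemma E0_top (i v : ℕ) (hv : i + 1 ≤ v) : E0 l' m' i v = l'.parts i - m'.parts i := by
  rw [E0, if_neg (by omega)]

lemma E0_col (i v : ℕ) (hv : 1 ≤ v) :
    m'.parts (i + 1) + E0 l' m' (i + 1) v ≤ m'.parts i + E0 l' m' i (v - 1) := by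
  have e1 : i - (v - 1) = i + 1 - v := by omega
  rw [E0, E0, e1]
  have h1 : m'.parts (i + 1) ≤ m'.parts i := m'.antitone' (by omega)
  have h2 : m'.parts (i + 1) ≤ m'.parts (i + 1 - v) := m'.antitone' (by omega)
  have h3 : m'.parts i ≤ m'.parts (i + 1 - v) := m'.antitone' (by omega)
  have h4 : l'.parts (i + 1) ≤ l'.parts i := l'.antitone' (by omega)
  have h5 := h i
  have h6 := h (i + 1)
  split_ifs <;> omega

lemma E0_row0 (k : ℕ) (hk : 1 ≤ k) : E0 l' m' 0 (k + 1) - E0 l' m' 0 k = 0 := by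
  rw [E0_top h _ _ (by omega), E0_top h _ _ (by omega)]
  omega

lemma E0_row (i k : ℕ) (hk : 1 ≤ k) :
    E0 l' m' (i + 1) (k + 1) - E0 l' m' (i + 1) k ≤ E0 l' m' i k - E0 l' m' i (k - 1) := by
  have e1 : i + 1 - (k + 1) = i - k := by omega
  have e2 : i - (k - 1) = i + 1 - k := by omega
  rw [E0, E0, E0, E0, e1, e2]
  have h1 : m'.parts (i + 1 - k) ≤ m'.parts (i - k) := m'.antitone' (by omega)
  have h2 : m'.parts (i + 1) ≤ m'.parts (i + 1 - k) := m'.antitone' (by omega)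
  have h3 : m'.parts i ≤ m'.parts (i + 1 - k) := m'.antitone' (by omega)
  have h4 : m'.parts i ≤ m'.parts (i - k) := m'.antitone' (by omega)
  have h5 : l'.parts (i + 1) ≤ l'.parts i := l'.antitone' (by omega)
  have h6 := h i
  have h7 := h (i + 1)
  have h8 : m'.parts (i + 1) ≤ m'.parts i := m'.antitone' (by omega)
  split_ifs <;> omega

lemma E0_R (r k : ℕ) (hk : 1 ≤ k) :
    ∑ i ∈ Finset.range (r + 1), (E0 l' m' i (k + 1) - E0 l' m' i k) ≤
      ∑ i ∈ Finset.range r, (E0 l' m' i k - E0 l' m' i (k - 1)) := by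
  rw [Finset.sum_range_succ' (fun i => E0 l' m' i (k + 1) - E0 l' m' i k) r,
    E0_row0 h k hk, add_zero]
  exact Finset.sum_le_sum fun i _ => E0_row h i k hk

end E0sec
end LRp
namespace LRp
open Finset

open Classical in
noncomputable def TabF (lS mS : LRPartition) (F : ℕ → ℕ → ℕ) : ℕ × ℕ → ℕ := fun p =>
  if p ∈ skewCells lS mS then sInf {v | p.2 < mS.parts p.1 + F p.1 v} else 0

section Synth

variable {lS mS : LRPartition} {F : ℕ → ℕ → ℕ}
  (hsub : LRPartition.Sub mS lS)
  (hF0 : ∀ i, F i 0 = 0)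
  (hFmono : ∀ i v w, v ≤ w → F i v ≤ F i w)
  (hFle : ∀ i v, F i v ≤ lS.parts i - mS.parts i)
  (hFtop : ∀ i v, i + 1 ≤ v → F i v = lS.parts i - mS.parts i)
  (hF3 : ∀ i v, 1 ≤ v → mS.parts (i + 1) + F (i + 1) v ≤ mS.parts i + F i (v - 1))

include hsub hFmono hFtop in
lemma tab_le_iff {i c : ℕ} (hc : (i, c) ∈ skewCells lS mS) (v : ℕ) :
    TabF lS mS F (i, c) ≤ v ↔ c < mS.parts i + F i v := by
  have hne : {v | ((i, c) : ℕ × ℕ).2 < mS.parts ((i, c) : ℕ × ℕ).1 + F ((i, c) : ℕ × ℕ).1 v}.Nonempty := by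
    refine ⟨i + 1, ?_⟩
    rw [Set.mem_setOf_eq]
    show c < mS.parts i + F i (i + 1)
    rw [hFtop i (i + 1) le_rfl]
    have h1 := hsub i
    have h2 : c < lS.parts i := hc.2
    omega
  rw [TabF, if_pos hc]
  constructor
  · intro hv
    have hmem := Nat.sInf_mem hne
    rw [Set.mem_setOf_eq] at hmem
    have hmem2 : c < mS.parts i + F i (sInf {v | ((i, c) : ℕ × ℕ).2 < mS.parts ((i, c) : ℕ × ℕ).1 + F ((i, c) : ℕ × ℕ).1 v}) := hmem
    have := hFmono i _ _ hv
    omega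
  · intro hv
    exact Nat.sInf_le hv

include hsub hF0 hFmono hFtop in
lemma tab_pos {i c : ℕ} (hc : (i, c) ∈ skewCells lS mS) : 0 < TabF lS mS F (i, c) := by
  by_contra hz
  have h0 : TabF lS mS F (i, c) ≤ 0 := by omega
  rw [tab_le_iff hsub hFmono hFtop hc 0, hF0 i] at h0
  have : mS.parts i ≤ c := hc.1
  omega

include hsub hFmono hFle hFtop in
lemma tabF_filter (i v : ℕ) :
    (rowF lS mS i).filter (fun c => TabF lS mS F (i, c) ≤ v) =
      Finset.Ico (mS.parts i) (mS.parts i + F i v) := by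
  ext c
  rw [Finset.mem_filter, rowF, Finset.mem_Ico, Finset.mem_Ico]
  constructor
  · rintro ⟨⟨h1, h2⟩, h3⟩
    have := (tab_le_iff hsub hFmono hFtop (mem_skewCells.mpr ⟨h1, h2⟩) v).mp h3
    exact ⟨h1, this⟩
  · rintro ⟨h1, h2⟩
    have hle := hFle i v
    have hs := hsub i
    have hcell : (i, c) ∈ skewCells lS mS := mem_skewCells.mpr ⟨h1, by omega⟩
    exact ⟨⟨h1, by omega⟩, (tab_le_iff hsub hFmono hFtop hcell v).mpr h2⟩

include hsub hFmono hFle hFtop in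
lemma tabE (i v : ℕ) : E lS mS (TabF lS mS F) i v = F i v := by
  rw [E, tabF_filter hsub hFmono hFle hFtop, Nat.card_Ico]
  omega

include hsub hFmono hFle hFtop in
lemma mem_rowIcoF {i c : ℕ} (k : ℕ) :
    c ∈ Finset.Ico (mS.parts i + F i k) (mS.parts i + F i (k + 1)) ↔
      (i, c) ∈ skewCells lS mS ∧ TabF lS mS F (i, c) = k + 1 := by
  rw [Finset.mem_Ico]
  constructor
  · rintro ⟨h1, h2⟩
    have hle := hFle i (k + 1)
    have hs := hsub i
    have hcell : (i, c) ∈ skewCells lS mS := mem_skewCells.mpr (by omega)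
    have ha := (tab_le_iff hsub hFmono hFtop hcell (k + 1)).mpr h2
    have hb : ¬ TabF lS mS F (i, c) ≤ k := fun hk => by
      have := (tab_le_iff hsub hFmono hFtop hcell k).mp hk; omega
    exact ⟨hcell, by omega⟩
  · rintro ⟨hcell, hv⟩
    have ha := (tab_le_iff hsub hFmono hFtop hcell (k + 1)).mp (by omega)
    have hb : ¬ c < mS.parts i + F i k := fun hk => by
      have := (tab_le_iff hsub hFmono hFtop hcell k).mpr hk; omega
    omega

include hsub hFmono hFle hFtop in
lemma tab_set_eq (R k : ℕ) :
    {p ∈ skewCells lS mS | p.1 < R ∧ TabF lS mS F p = k + 1} =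
      ↑(grid R (fun i => Finset.Ico (mS.parts i + F i k) (mS.parts i + F i (k + 1)))) := by
  ext ⟨i, c⟩
  rw [Set.mem_setOf_eq, Finset.mem_coe, mem_grid]
  simp only
  rw [mem_rowIcoF hsub hFmono hFle hFtop k]
  tauto

include hsub hF0 hFmono hFtop hF3 in
lemma tab_col_strict : ∀ i i' j, (i, j) ∈ skewCells lS mS → (i', j) ∈ skewCells lS mS →
    i < i' → TabF lS mS F (i, j) < TabF lS mS F (i', j) := by
  have adj : ∀ i j, (i, j) ∈ skewCells lS mS → (i + 1, j) ∈ skewCells lS mS →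
      TabF lS mS F (i, j) < TabF lS mS F (i + 1, j) := by
    intro i j hc hc'
    set v' := TabF lS mS F (i + 1, j) with hv'
    have hv'1 : 1 ≤ v' := tab_pos hsub hF0 hFmono hFtop hc'
    have hj : j < mS.parts (i + 1) + F (i + 1) v' :=
      (tab_le_iff hsub hFmono hFtop hc' v').mp le_rfl
    have h3 := hF3 i v' hv'1
    have : j < mS.parts i + F i (v' - 1) := by omega
    have := (tab_le_iff hsub hFmono hFtop hc (v' - 1)).mpr this
    omega
  intro i i' j hc hc' hii'
  obtain ⟨d, rfl⟩ : ∃ d, i' = i + 1 + d := ⟨i' - i - 1, by omega⟩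
  clear hii'
  induction d with
  | zero => exact adj i j hc hc'
  | succ d ihd =>
    have hmid : (i + 1 + d, j) ∈ skewCells lS mS := by
      rw [mem_skewCells]
      constructor
      · exact le_trans (mS.antitone' (show i ≤ i + 1 + d by omega)) hc.1
      · exact lt_of_lt_of_le hc'.2 (lS.antitone' (by omega))
    have h1 := ihd hmid
    have h2 := adj (i + 1 + d) j hmid (by rw [show i + 1 + d + 1 = i + 1 + (d + 1) by omega]; exact hc')
    have : i + 1 + d + 1 = i + 1 + (d + 1) := by omega
    rw [this] at h2
    omega

end Synth
end LRp
namespace LRp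
open Finset

section Synth2

variable {lS mS : LRPartition} {F : ℕ → ℕ → ℕ}
  (hsub : LRPartition.Sub mS lS)
  (hF0 : ∀ i, F i 0 = 0)
  (hFmono : ∀ i v w, v ≤ w → F i v ≤ F i w)
  (hFle : ∀ i v, F i v ≤ lS.parts i - mS.parts i)
  (hFtop : ∀ i v, i + 1 ≤ v → F i v = lS.parts i - mS.parts i)
  (hF3 : ∀ i v, 1 ≤ v → mS.parts (i + 1) + F (i + 1) v ≤ mS.parts i + F i (v - 1))
  (hF5 : ∀ r k, 1 ≤ k → ∑ i ∈ Finset.range (r + 1), (F i (k + 1) - F i k) ≤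
      ∑ i ∈ Finset.range r, (F i k - F i (k - 1)))

include hsub hF0 hFmono hFle hFtop hF3 hF5 in
lemma tab_isLR : ∃ ν : LRPartition, IsLRTableau lS mS ν (TabF lS mS F) := by
  obtain ⟨NS, hNS⟩ := lS.eventually_zero
  have hcfin : (skewCells lS mS).Finite := by
    apply Set.Finite.subset (grid NS (fun i => rowF lS mS i)).finite_toSet
    rintro ⟨i, c⟩ hp
    rw [Finset.mem_coe, mem_grid]
    obtain ⟨h1, h2⟩ : mS.parts i ≤ c ∧ c < lS.parts i := hp
    show i < NS ∧ c ∈ rowF lS mS i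
    refine ⟨?_, by rw [rowF, Finset.mem_Ico]; omega⟩
    by_contra hi
    have := hNS i (by omega)
    omega
  refine ⟨⟨fun k => ∑ i ∈ Finset.range NS, (F i (k + 1) - F i k), ?_, ?_⟩, ?_⟩
  · apply antitone_nat_of_succ_le
    intro k
    have h5 := hF5 NS (k + 1) (by omega)
    simp only [Nat.add_sub_cancel] at h5
    calc ∑ i ∈ Finset.range NS, (F i (k + 1 + 1) - F i (k + 1))
        ≤ ∑ i ∈ Finset.range (NS + 1), (F i (k + 1 + 1) - F i (k + 1)) := by
          rw [Finset.sum_range_succ]; omega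
      _ ≤ ∑ i ∈ Finset.range NS, (F i (k + 1) - F i k) := h5
  · refine ⟨NS, fun k hk => Finset.sum_eq_zero fun i hi => ?_⟩
    rw [Finset.mem_range] at hi
    rw [hFtop i (k + 1) (by omega), hFtop i k (by omega)]
    omega
  · constructor
    · exact hsub
    · rintro ⟨i, c⟩ hp
      exact tab_pos hsub hF0 hFmono hFtop hp
    · intro p hp
      rw [TabF, if_neg hp]
    · intro i j j' hc hc' hjj'
      set v := TabF lS mS F (i, j') with hv
      have h1 := (tab_le_iff hsub hFmono hFtop hc' v).mp le_rfl
      exact (tab_le_iff hsub hFmono hFtop hc v).mpr (by omega)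
    · exact tab_col_strict hsub hF0 hFmono hFtop hF3
    · intro k
      show _ = ∑ i ∈ Finset.range NS, (F i (k + 1) - F i k)
      have hset : {p ∈ skewCells lS mS | TabF lS mS F p = k + 1} =
          {p ∈ skewCells lS mS | p.1 < NS ∧ TabF lS mS F p = k + 1} := by
        ext ⟨i, c⟩
        simp only [Set.mem_setOf_eq]
        constructor
        · rintro ⟨hcell, hval⟩
          refine ⟨hcell, ?_, hval⟩
          by_contra hi
          have h2 : c < lS.parts i := hcell.2
          have := hNS i (by omega)
          omega
        · rintro ⟨hcell, _, hval⟩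
          exact ⟨hcell, hval⟩
      rw [hset, tab_set_eq hsub hFmono hFle hFtop NS k, Set.ncard_coe_finset, card_grid]
      apply Finset.sum_congr rfl
      intro i _
      rw [Nat.card_Ico]
      omega
    · intro r c k hk
      have hk1 : k - 1 + 1 = k := by omega
      have hA : {p ∈ skewCells lS mS | (p.1 < r ∨ (p.1 = r ∧ c ≤ p.2)) ∧ TabF lS mS F p = k + 1} ⊆
          {p ∈ skewCells lS mS | p.1 < r + 1 ∧ TabF lS mS F p = k + 1} := by
        rintro ⟨i, c'⟩ ⟨hcell, hpos, hval⟩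
        refine ⟨hcell, ?_, hval⟩
        simp only at hpos ⊢
        omega
      have hB : {p ∈ skewCells lS mS | p.1 < r ∧ TabF lS mS F p = k} ⊆
          {p ∈ skewCells lS mS | (p.1 < r ∨ (p.1 = r ∧ c ≤ p.2)) ∧ TabF lS mS F p = k} := by
        rintro ⟨i, c'⟩ ⟨hcell, hir, hval⟩
        exact ⟨hcell, Or.inl hir, hval⟩
      have e1 := tab_set_eq hsub hFmono hFle hFtop (F := F) (r + 1) k
      have e2 := tab_set_eq hsub hFmono hFle hFtop (F := F) r (k - 1)
      rw [hk1] at e2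
      calc {p ∈ skewCells lS mS | (p.1 < r ∨ (p.1 = r ∧ c ≤ p.2)) ∧ TabF lS mS F p = k + 1}.ncard
          ≤ {p ∈ skewCells lS mS | p.1 < r + 1 ∧ TabF lS mS F p = k + 1}.ncard := by
            refine Set.ncard_le_ncard hA ?_
            rw [e1]
            exact (grid (r + 1) _).finite_toSet
        _ = ∑ i ∈ Finset.range (r + 1), (F i (k + 1) - F i k) := by
            rw [e1, Set.ncard_coe_finset, card_grid]
            apply Finset.sum_congr rfl
            intro i _
            rw [Nat.card_Ico]
            omega
        _ ≤ ∑ i ∈ Finset.range r, (F i k - F i (k - 1)) := hF5 r k hk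
        _ = {p ∈ skewCells lS mS | p.1 < r ∧ TabF lS mS F p = k}.ncard := by
            rw [e2, Set.ncard_coe_finset, card_grid]
            apply Finset.sum_congr rfl
            intro i _
            rw [Nat.card_Ico]
            omega
        _ ≤ {p ∈ skewCells lS mS | (p.1 < r ∨ (p.1 = r ∧ c ≤ p.2)) ∧ TabF lS mS F p = k}.ncard := by
            refine Set.ncard_le_ncard hB (Set.Finite.subset hcfin ?_)
            rintro p ⟨hp, _⟩
            exact hp

end Synth2
end LRp
namespace LRp
open Finset

lemma parts_injective : Function.Injective LRPartition.parts := by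
  rintro ⟨p1, a1, e1⟩ ⟨p2, a2, e2⟩ h
  simpa using h

lemma S_finite (l m : LRPartition) : {T : ℕ × ℕ → ℕ | ∃ ν, IsLRTableau l m ν T}.Finite := by
  classical
  obtain ⟨NL, hNL⟩ := l.eventually_zero
  set cellsF : Finset (ℕ × ℕ) := grid NL (rowF l m) with hcellsF
  set ρ : (ℕ × ℕ → ℕ) → ({x // x ∈ cellsF} → Fin (NL + 2)) :=
    fun T q => ⟨min (T q.1) (NL + 1), by omega⟩ with hρ
  have hmemcell : ∀ p : ℕ × ℕ, p ∈ skewCells l m → p ∈ cellsF := by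
    rintro ⟨i, c⟩ hp
    obtain ⟨h1, h2⟩ : m.parts i ≤ c ∧ c < l.parts i := hp
    rw [hcellsF, mem_grid]
    show i < NL ∧ c ∈ rowF l m i
    refine ⟨?_, by rw [rowF, Finset.mem_Ico]; omega⟩
    by_contra hi
    have := hNL i (by omega)
    omega
  apply Set.Finite.of_finite_image (f := ρ) (Set.toFinite _)
  rintro T1 ⟨ν1, h1⟩ T2 ⟨ν2, h2⟩ heq
  funext p
  by_cases hc : p ∈ skewCells l m
  · obtain ⟨i, c⟩ := p
    have hb1 : T1 (i, c) ≤ NL + 1 := le_trans (T_le_row h1 hc) (by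
      have h2' : c < l.parts i := hc.2
      by_contra hi
      have := hNL i (by omega)
      omega)
    have hb2 : T2 (i, c) ≤ NL + 1 := le_trans (T_le_row h2 hc) (by
      have h2' : c < l.parts i := hc.2
      by_contra hi
      have := hNL i (by omega)
      omega)
    have := congrFun heq ⟨(i, c), hmemcell _ hc⟩
    rw [hρ] at this
    simp only [Fin.mk.injEq] at this
    omega
  · rw [h1.zero p hc, h2.zero p hc]

lemma sum_LR_eq (l m : LRPartition) :
    ∑ᶠ ν : LRPartition, LRcoeff l m ν = {T : ℕ × ℕ → ℕ | ∃ ν, IsLRTableau l m ν T}.ncard := by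
  classical
  have hSfin := S_finite l m
  have hAfin : ∀ ν : LRPartition, {T : ℕ × ℕ → ℕ | IsLRTableau l m ν T}.Finite :=
    fun ν => Set.Finite.subset hSfin (fun T hT => ⟨ν, hT⟩)
  have hsupp : {ν : LRPartition | {T : ℕ × ℕ → ℕ | IsLRTableau l m ν T}.Nonempty}.Finite := by
    apply Set.Finite.of_finite_image (f := LRPartition.parts) ?_ parts_injective.injOn
    apply Set.Finite.subset
      (Set.Finite.image (fun T => (fun k => {p ∈ skewCells l m | T p = k + 1}.ncard)) hSfin)
    rintro x ⟨ν, hν, rfl⟩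
    obtain ⟨T, hT⟩ := hν
    exact ⟨T, ⟨ν, hT⟩, funext fun k => (hT.content k)⟩
  have hVsub : Function.support (fun ν => LRcoeff l m ν) ⊆ ↑hsupp.toFinset := by
    intro ν hν
    rw [Function.mem_support] at hν
    rw [Finset.mem_coe, Set.Finite.mem_toFinset]
    exact Set.nonempty_of_ncard_ne_zero hν
  rw [finsum_eq_finset_sum_of_support_subset _ hVsub]
  have hLR : ∀ ν, LRcoeff l m ν = ((hAfin ν).toFinset).card :=
    fun ν => Set.ncard_eq_toFinset_card _ (hAfin ν)
  rw [Finset.sum_congr rfl (fun ν _ => hLR ν)]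
  have hdisj : ∀ x ∈ hsupp.toFinset, ∀ y ∈ hsupp.toFinset, x ≠ y →
      Disjoint ((hAfin x).toFinset) ((hAfin y).toFinset) := by
    intro x _ y _ hxy
    rw [Finset.disjoint_left]
    intro T hTx hTy
    rw [Set.Finite.mem_toFinset] at hTx hTy
    apply hxy
    apply parts_injective
    funext k
    rw [← hTx.content k, ← hTy.content k]
  rw [← Finset.card_biUnion hdisj]
  have hUeq : hsupp.toFinset.biUnion (fun ν => (hAfin ν).toFinset) = hSfin.toFinset := by
    ext T
    rw [Finset.mem_biUnion, Set.Finite.mem_toFinset]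
    constructor
    · rintro ⟨ν, _, hT⟩
      rw [Set.Finite.mem_toFinset] at hT
      exact ⟨ν, hT⟩
    · rintro ⟨ν, hT⟩
      exact ⟨ν, Set.Finite.mem_toFinset hsupp |>.mpr ⟨T, hT⟩, (Set.Finite.mem_toFinset _).mpr hT⟩
  rw [hUeq, ← Set.ncard_eq_toFinset_card _ hSfin]

end LRp
/-- Lemma 3.4. For skew diagrams `λ/μ` and `λ'/μ'`,
`Σ_{ν'} c(λ+λ'; μ+μ', ν') ≥ Σ_ν c(λ;μ,ν)`. -/
theorem lr_sum_add_ge (l m l' m' : LRPartition)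
    (hml : LRPartition.Sub m l) (hml' : LRPartition.Sub m' l') :
    (∑ᶠ ν : LRPartition, LRcoeff l m ν) ≤
      ∑ᶠ ν' : LRPartition, LRcoeff (l + l') (m + m') ν' := by
  classical
  rw [LRp.sum_LR_eq l m, LRp.sum_LR_eq (l + l') (m + m')]
  set fF : (ℕ × ℕ → ℕ) → ℕ → ℕ → ℕ :=
    fun T i v => LRp.E l m T i v + LRp.E0 l' m' i v with hfF
  have hsubM : LRPartition.Sub (m + m') (l + l') := fun i => by
    simp only [LRPartition.add_parts]
    exact Nat.add_le_add (hml i) (hml' i)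
  have key : ∀ T ν, IsLRTableau l m ν T →
      (∃ ν', IsLRTableau (l + l') (m + m') ν' (LRp.TabF (l + l') (m + m') (fF T))) ∧
      (∀ i v, LRp.E (l + l') (m + m') (LRp.TabF (l + l') (m + m') (fF T)) i v = fF T i v) := by
    intro T ν hT
    have hF0 : ∀ i, fF T i 0 = 0 := fun i => by
      simp only [hfF]
      rw [LRp.E_zero hT i, LRp.E0_zero hml' i]
    have hFmono : ∀ i v w, v ≤ w → fF T i v ≤ fF T i w := fun i v w hvw =>
      Nat.add_le_add (LRp.E_mono l m T i hvw) (LRp.E0_mono hml' i hvw)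
    have hFle : ∀ i v, fF T i v ≤ (l + l').parts i - (m + m').parts i := fun i v => by
      have h1 := LRp.E_le l m T i v
      have h2 := LRp.E0_le hml' i v
      have h3 := hml i
      have h4 := hml' i
      simp only [hfF, LRPartition.add_parts]
      omega
    have hFtop : ∀ i v, i + 1 ≤ v →
        fF T i v = (l + l').parts i - (m + m').parts i := fun i v hv => by
      have h1 := LRp.E_top hT i v hv
      have h2 := LRp.E0_top hml' i v hv
      have h3 := hml i
      have h4 := hml' i
      simp only [hfF, LRPartition.add_parts]
      omega
    have hF3 : ∀ i v, 1 ≤ v → (m + m').parts (i + 1) + fF T (i + 1) v ≤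
        (m + m').parts i + fF T i (v - 1) := fun i v hv => by
      have h1 := LRp.E_col hT i v hv
      have h2 := LRp.E0_col hml' i v hv
      simp only [hfF, LRPartition.add_parts]
      omega
    have hF5 : ∀ r k, 1 ≤ k → ∑ i ∈ Finset.range (r + 1), (fF T i (k + 1) - fF T i k) ≤
        ∑ i ∈ Finset.range r, (fF T i k - fF T i (k - 1)) := fun r k hk => by
      have h1 := LRp.sumR hT r k hk
      have h2 := LRp.E0_R hml' r k hk
      have es1 : ∀ s : Finset ℕ, ∑ i ∈ s, (fF T i (k + 1) - fF T i k) =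
          ∑ i ∈ s, (LRp.E l m T i (k + 1) - LRp.E l m T i k) +
          ∑ i ∈ s, (LRp.E0 l' m' i (k + 1) - LRp.E0 l' m' i k) := fun s => by
        rw [← Finset.sum_add_distrib]
        apply Finset.sum_congr rfl
        intro i _
        have hm1 := LRp.E_mono l m T i (show k ≤ k + 1 by omega)
        have hm2 := LRp.E0_mono hml' i (show k ≤ k + 1 by omega)
        simp only [hfF]
        omega
      have es2 : ∀ s : Finset ℕ, ∑ i ∈ s, (fF T i k - fF T i (k - 1)) =
          ∑ i ∈ s, (LRp.E l m T i k - LRp.E l m T i (k - 1)) +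
          ∑ i ∈ s, (LRp.E0 l' m' i k - LRp.E0 l' m' i (k - 1)) := fun s => by
        rw [← Finset.sum_add_distrib]
        apply Finset.sum_congr rfl
        intro i _
        have hm1 := LRp.E_mono l m T i (show k - 1 ≤ k by omega)
        have hm2 := LRp.E0_mono hml' i (show k - 1 ≤ k by omega)
        simp only [hfF]
        omega
      rw [es1, es2]
      exact Nat.add_le_add h1 h2
    exact ⟨LRp.tab_isLR hsubM hF0 hFmono hFle hFtop hF3 hF5,
      fun i v => LRp.tabE hsubM hFmono hFle hFtop i v⟩
  refine Set.ncard_le_ncard_of_injOn (fun T => LRp.TabF (l + l') (m + m') (fF T)) ?_ ?_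
    (LRp.S_finite (l + l') (m + m'))
  · rintro T ⟨ν, hT⟩
    exact (key T ν hT).1
  · rintro T1 ⟨ν1, hT1⟩ T2 ⟨ν2, hT2⟩ heq
    have heq' : LRp.TabF (l + l') (m + m') (fF T1) = LRp.TabF (l + l') (m + m') (fF T2) := heq
    have hE : ∀ i v, LRp.E l m T1 i v = LRp.E l m T2 i v := by
      intro i v
      have h1 := (key T1 ν1 hT1).2 i v
      have h2 := (key T2 ν2 hT2).2 i v
      rw [heq'] at h1
      rw [h2] at h1
      simp only [hfF] at h1
      omega
    funext p
    by_cases hc : p ∈ skewCells l m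
    · obtain ⟨i, c⟩ := p
      have ha := (LRp.le_iff hT1 hc (T2 (i, c))).mpr (by
        rw [hE]
        exact (LRp.le_iff hT2 hc (T2 (i, c))).mp le_rfl)
      have hb := (LRp.le_iff hT2 hc (T1 (i, c))).mpr (by
        rw [← hE]
        exact (LRp.le_iff hT1 hc (T1 (i, c))).mp le_rfl)
      omega
    · rw [hT1.zero p hc, hT2.zero p hc]
end
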